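/- arXiv:2006.11561 — 4 statements merged into one kernel-verified Lean document; each statement's English description precedes it below -/
import Mathlib

section
/- Let (X_k)_{k≥1} be a martingale difference sequence adapted to a filtration (F_k)_{k≥0} on a probability space, and let τ > 0 be such that P[|X_k| > m] ≤ 2·e^{−m/(4τ)} for all k ≥ 1 and all m ≥ 0. Then for every δ ∈ (0,1), with probability at least 1 − δ, simultaneously for all integers K ≥ 1: ∑_{k=1}^K X_k ≤ 44·τ·√( K · (log(4K/δ))³ ). -/
open MeasureTheory Finset Real Set
open scoped ENNReal NNReal

private lemma aux_clamp_abs {M x : ℝ} (hM : 0 ≤ M) :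
    |max (-M) (min M x) - x| = max (|x| - M) 0 := by
  rcases le_total x (-M) with h1 | h1
  · rw [min_eq_right (by linarith), max_eq_left h1,
      abs_of_nonneg (by linarith : (0:ℝ) ≤ -M - x),
      abs_of_nonpos (by linarith : x ≤ 0), max_eq_left (by linarith)]
    ring
  · rcases le_total M x with h2 | h2
    · rw [min_eq_left h2, max_eq_right (by linarith),
        abs_of_nonpos (by linarith : M - x ≤ 0),
        abs_of_nonneg (by linarith : (0:ℝ) ≤ x), max_eq_left (by linarith)]
      ring
    · rw [min_eq_right h2, max_eq_right h1, sub_self, abs_zero]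
      have hx : |x| ≤ M := abs_le.2 ⟨by linarith, h2⟩
      rw [max_eq_right (by linarith)]

private lemma aux_exp_le_cosh_add {d w : ℝ} (hd : 0 < d) (hw : |w| ≤ d) :
    Real.exp w ≤ Real.cosh d + (w / d) * Real.sinh d := by
  obtain ⟨h1, h2⟩ := abs_le.1 hw
  have ha : (0:ℝ) ≤ (d - w) / (2 * d) := div_nonneg (by linarith) (by linarith)
  have hb : (0:ℝ) ≤ (d + w) / (2 * d) := div_nonneg (by linarith) (by linarith)
  have hab : (d - w) / (2 * d) + (d + w) / (2 * d) = 1 := by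
    rw [← add_div, div_eq_one_iff_eq (by positivity)]; ring
  have := convexOn_exp.2 (Set.mem_univ (-d)) (Set.mem_univ d) ha hb hab
  simp only [smul_eq_mul] at this
  have harg : (d - w) / (2 * d) * -d + (d + w) / (2 * d) * d = w := by
    rw [div_mul_eq_mul_div, div_mul_eq_mul_div, ← add_div, div_eq_iff (by positivity)]
    ring
  rw [harg] at this
  have key : (d - w) / (2 * d) * Real.exp (-d) + (d + w) / (2 * d) * Real.exp d
      = Real.cosh d + w / d * Real.sinh d := by
    rw [Real.cosh_eq, Real.sinh_eq]
    field_simp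
    ring
  linarith


private lemma aux_sqrt_sum_le (N : ℕ) :
    ∑ K ∈ Finset.Icc 1 N, (1:ℝ) / (K * Real.sqrt K) ≤ 3 := by
  have key : ∀ N : ℕ, 1 ≤ N → ∑ K ∈ Finset.Icc 1 N, (1:ℝ) / (K * Real.sqrt K)
      ≤ 3 - 2 / Real.sqrt N := by
    intro N hN
    induction N with
    | zero => omega
    | succ n ih =>
      rcases Nat.eq_or_lt_of_le hN with h1 | h1
      · simp [← h1]
        norm_num
      · have hn : 1 ≤ n := by omega
        rw [Finset.sum_Icc_succ_top (by omega : 1 ≤ n + 1)]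
        have ha : (0:ℝ) < Real.sqrt n := Real.sqrt_pos.2 (by positivity)
        have hb : (0:ℝ) < Real.sqrt (n + 1) := Real.sqrt_pos.2 (by positivity)
        have ha2 : (Real.sqrt n) ^ 2 = (n:ℝ) := Real.sq_sqrt (by positivity)
        have hb2 : (Real.sqrt (n+1)) ^ 2 = (n:ℝ) + 1 := by
          rw [Real.sq_sqrt (by positivity)]
        have hab : Real.sqrt n ≤ Real.sqrt (n+1) := Real.sqrt_le_sqrt (by linarith)
        have step : 1 / (((n:ℝ)+1) * Real.sqrt (n+1)) ≤ 2 / Real.sqrt n - 2 / Real.sqrt (n+1) := by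
          rw [div_sub_div _ _ (ne_of_gt ha) (ne_of_gt hb), div_le_div_iff₀ (by positivity) (by positivity)]
          have h3 : ((n:ℝ)+1) * Real.sqrt (n+1) = Real.sqrt (n+1) ^ 3 := by
            rw [pow_succ, hb2]
          rw [h3]
          nlinarith [sq_nonneg (Real.sqrt (n+1) - Real.sqrt n), mul_pos ha hb]
        have := ih hn
        have hcast : ((n:ℝ) + 1) = ((n + 1 : ℕ) : ℝ) := by push_cast; ring
        rw [hcast] at step
        push_cast
        push_cast at this step
        linarith
  rcases Nat.eq_zero_or_pos N with h | h
  · simp [h]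
  · have := key N h
    have : (0:ℝ) < Real.sqrt N := Real.sqrt_pos.2 (by positivity)
    have h2 : 0 < 2 / Real.sqrt N := by positivity
    linarith [key N h]


private lemma aux_condexp_exp_le {Ω : Type*} {m0 : MeasurableSpace Ω} {μ : Measure Ω}
    [IsProbabilityMeasure μ] {m : MeasurableSpace Ω} (hm : m ≤ m0)
    {Z : Ω → ℝ} (hZint : Integrable Z μ)
    {c : ℝ} (hc : 0 < c) (hbd : ∀ᵐ ω ∂μ, |Z ω| ≤ c)
    (h0 : μ[Z | m] =ᵐ[μ] 0) {y : ℝ} (hy : 0 < y) :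
    μ[fun ω => Real.exp (y * Z ω) | m] ≤ᵐ[μ] fun _ => Real.exp (y^2 * c^2 / 2) := by
  have hyc : 0 < y * c := by positivity
  have hptw : ∀ᵐ ω ∂μ, Real.exp (y * Z ω) ≤
      Real.cosh (y * c) + (Real.sinh (y * c) / c) * Z ω := by
    filter_upwards [hbd] with ω hω
    have h1 : |y * Z ω| ≤ y * c := by
      rw [abs_mul, abs_of_pos hy]
      exact mul_le_mul_of_nonneg_left hω hy.le
    have := aux_exp_le_cosh_add hyc h1
    have harg : y * Z ω / (y * c) = Z ω / c := by
      rw [mul_div_mul_left _ _ (ne_of_gt hy)]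
    rw [harg] at this
    refine this.trans_eq ?_
    ring
  have hint1 : Integrable (fun ω => Real.exp (y * Z ω)) μ := by
    refine Integrable.mono' (integrable_const (Real.exp (y * c))) ?_ ?_
    · exact Real.continuous_exp.comp_aestronglyMeasurable (hZint.aestronglyMeasurable.const_mul y)
    · filter_upwards [hbd] with ω hω
      rw [Real.norm_eq_abs, abs_of_pos (Real.exp_pos _), Real.exp_le_exp]
      have := (abs_le.1 hω).2
      nlinarith
  have hint2 : Integrable (fun ω => Real.cosh (y * c) + (Real.sinh (y * c) / c) * Z ω) μ :=
    (integrable_const _).add (hZint.const_mul _)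
  have h1 := condExp_mono (m := m) hint1 hint2 hptw
  have h2 : μ[fun ω => Real.cosh (y * c) + (Real.sinh (y * c) / c) * Z ω | m]
      =ᵐ[μ] fun _ => Real.cosh (y * c) := by
    have ha := condExp_add (μ := μ) (m := m) (integrable_const (Real.cosh (y * c)))
      (hZint.const_mul (Real.sinh (y * c) / c))
    have hs : μ[fun ω => (Real.sinh (y * c) / c) * Z ω | m]
        =ᵐ[μ] fun ω => (Real.sinh (y * c) / c) * (μ[Z | m]) ω := by
      have := condExp_smul (μ := μ) (m := m) (Real.sinh (y * c) / c) Z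
      filter_upwards [this] with ω hω
      exact hω
    refine ha.trans ?_
    have hc2 := condExp_const hm (Real.cosh (y * c)) (μ := μ)
    filter_upwards [hs, h0] with ω h3 h4
    simp only [Pi.add_apply, hc2]
    rw [h3, h4]
    simp
  have hfin : Real.cosh (y * c) ≤ Real.exp (y^2 * c^2 / 2) := by
    have := Real.cosh_le_exp_half_sq (y * c)
    rwa [mul_pow] at this
  filter_upwards [h1, h2] with ω hω1 hω2
  calc (μ[fun ω => Real.exp (y * Z ω) | m]) ω ≤ _ := hω1
  _ ≤ _ := by rw [hω2]; exact hfin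


private lemma aux_azuma {Ω : Type*} {m0 : MeasurableSpace Ω} {μ : Measure Ω}
    [IsProbabilityMeasure μ] (ℱ : Filtration ℕ m0) (Z : ℕ → Ω → ℝ) {c : ℝ} (hc : 0 < c)
    (K : ℕ) (hK : 1 ≤ K)
    (hmeasZ : ∀ k, 1 ≤ k → k ≤ K → StronglyMeasurable[ℱ k] (Z k))
    (hbd : ∀ k, 1 ≤ k → k ≤ K → ∀ᵐ ω ∂μ, |Z k ω| ≤ c)
    (h0 : ∀ k, 1 ≤ k → k ≤ K → μ[Z k | ℱ (k-1)] =ᵐ[μ] 0)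
    {t : ℝ} (ht : 0 < t) :
    μ {ω | t ≤ ∑ k ∈ Finset.Icc 1 K, Z k ω} ≤
      ENNReal.ofReal (Real.exp (-t^2 / (2 * K * c^2))) := by
  have hKR : (0:ℝ) < K := by exact_mod_cast hK
  set y : ℝ := t / (K * c^2) with hy
  have hy0 : 0 < y := by positivity
  have hmgf : ∀ n, n ≤ K → (StronglyMeasurable[ℱ n] (fun ω => ∑ k ∈ Finset.Icc 1 n, Z k ω))
      ∧ (∀ᵐ ω ∂μ, |∑ k ∈ Finset.Icc 1 n, Z k ω| ≤ n * c)
      ∧ (Integrable (fun ω => Real.exp (y * ∑ k ∈ Finset.Icc 1 n, Z k ω)) μ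
      ∧ ∫ ω, Real.exp (y * ∑ k ∈ Finset.Icc 1 n, Z k ω) ∂μ ≤ Real.exp (n * (y^2 * c^2 / 2))) := by
    intro n
    induction n with
    | zero =>
      intro _
      simp only [show Finset.Icc 1 0 = (∅ : Finset ℕ) from rfl, Finset.sum_empty]
      refine ⟨stronglyMeasurable_const, ?_, ?_, ?_⟩
      · filter_upwards with ω; simp
      · simpa using integrable_const (1:ℝ)
      · simp
    | succ n ih =>
      intro hle
      have hnK : n ≤ K := Nat.le_of_succ_le hle
      have h1n : 1 ≤ n + 1 := Nat.le_add_left 1 n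
      obtain ⟨hSmeas, hSbd, hSint, hSval⟩ := ih hnK
      have hsumsplit : ∀ ω, ∑ k ∈ Finset.Icc 1 (n+1), Z k ω
          = (∑ k ∈ Finset.Icc 1 n, Z k ω) + Z (n+1) ω := fun ω =>
        Finset.sum_Icc_succ_top h1n _
      have hZm : StronglyMeasurable[ℱ (n+1)] (Z (n+1)) := hmeasZ (n+1) h1n hle
      have hZbd : ∀ᵐ ω ∂μ, |Z (n+1) ω| ≤ c := hbd (n+1) h1n hle
      have hZint : Integrable (Z (n+1)) μ := by
        refine Integrable.mono' (integrable_const c) ((hZm.mono (ℱ.le _)).aestronglyMeasurable) ?_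
        filter_upwards [hZbd] with ω hω using by rwa [Real.norm_eq_abs]
      have heq : (fun ω => ∑ k ∈ Finset.Icc 1 (n+1), Z k ω)
          = fun ω => (∑ k ∈ Finset.Icc 1 n, Z k ω) + Z (n+1) ω := funext hsumsplit
      have hmeas' : StronglyMeasurable[ℱ (n+1)] (fun ω => ∑ k ∈ Finset.Icc 1 (n+1), Z k ω) := by
        rw [heq]
        exact (hSmeas.mono (ℱ.mono (Nat.le_succ n))).add hZm
      have hbd' : ∀ᵐ ω ∂μ, |∑ k ∈ Finset.Icc 1 (n+1), Z k ω| ≤ (n+1 : ℕ) * c := by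
        filter_upwards [hSbd, hZbd] with ω h1 h2
        rw [hsumsplit ω]
        calc |(∑ k ∈ Finset.Icc 1 n, Z k ω) + Z (n+1) ω|
            ≤ |∑ k ∈ Finset.Icc 1 n, Z k ω| + |Z (n+1) ω| := abs_add_le _ _
        _ ≤ n * c + c := add_le_add h1 h2
        _ = (n+1 : ℕ) * c := by push_cast; ring
      -- the mgf step
      set S : Ω → ℝ := fun ω => ∑ k ∈ Finset.Icc 1 n, Z k ω with hS
      set f : Ω → ℝ := fun ω => Real.exp (y * S ω) with hf
      set g : Ω → ℝ := fun ω => Real.exp (y * Z (n+1) ω) with hg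
      have hfmeas : StronglyMeasurable[ℱ n] f :=
        Real.continuous_exp.comp_stronglyMeasurable (hSmeas.const_mul y)
      have hfbd : ∀ᵐ ω ∂μ, ‖f ω‖ ≤ Real.exp (y * (n * c)) := by
        filter_upwards [hSbd] with ω hω
        rw [Real.norm_eq_abs, abs_of_pos (Real.exp_pos _), Real.exp_le_exp]
        exact mul_le_mul_of_nonneg_left ((abs_le.1 hω).2) hy0.le
      have hgbd : ∀ᵐ ω ∂μ, ‖g ω‖ ≤ Real.exp (y * c) := by
        filter_upwards [hZbd] with ω hω
        rw [Real.norm_eq_abs, abs_of_pos (Real.exp_pos _), Real.exp_le_exp]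
        calc y * Z (n+1) ω ≤ y * |Z (n+1) ω| :=
              mul_le_mul_of_nonneg_left (le_abs_self _) hy0.le
        _ ≤ y * c := mul_le_mul_of_nonneg_left hω hy0.le
      have hgmeas0 : AEStronglyMeasurable g μ :=
        Real.continuous_exp.comp_aestronglyMeasurable
          (((hZm.mono (ℱ.le _)).aestronglyMeasurable).const_mul y)
      have hgint : Integrable g μ := Integrable.mono' (integrable_const _) hgmeas0 hgbd
      have hfgint : Integrable (f * g) μ := by
        refine Integrable.mono' (integrable_const (Real.exp (y * (n * c)) * Real.exp (y * c)))
          (((hfmeas.mono (ℱ.le n)).aestronglyMeasurable).mul hgmeas0) ?_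
        filter_upwards [hfbd, hgbd] with ω h1 h2
        rw [Pi.mul_apply, norm_mul]
        exact mul_le_mul h1 h2 (norm_nonneg _) (Real.exp_pos _).le
      have hcond : μ[g | ℱ n] ≤ᵐ[μ] fun _ => Real.exp (y^2 * c^2 / 2) := by
        have := h0 (n+1) h1n hle
        simp only [Nat.add_sub_cancel] at this
        exact aux_condexp_exp_le (ℱ.le n) hZint hc hZbd this hy0
      have hpull : μ[f * g | ℱ n] =ᵐ[μ] f * μ[g | ℱ n] :=
        condExp_mul_of_stronglyMeasurable_left hfmeas hfgint hgint
      have hfmul_int : Integrable (f * μ[g | ℱ n]) μ := by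
        refine Integrable.bdd_mul (c := Real.exp (y * (n * c))) integrable_condExp
          ((hfmeas.mono (ℱ.le n)).aestronglyMeasurable) hfbd
      have hstep : ∫ ω, (f * g) ω ∂μ ≤ Real.exp (y^2 * c^2 / 2) * ∫ ω, f ω ∂μ := by
        rw [← integral_condExp (ℱ.le n) (f := f * g)]
        rw [integral_congr_ae hpull]
        calc ∫ ω, (f * μ[g | ℱ n]) ω ∂μ
            ≤ ∫ ω, Real.exp (y^2 * c^2 / 2) * f ω ∂μ := by
              refine integral_mono_ae hfmul_int ((Integrable.mono' (integrable_const _)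
                ((hfmeas.mono (ℱ.le n)).aestronglyMeasurable) hfbd).const_mul _) ?_
              filter_upwards [hcond] with ω hω
              rw [Pi.mul_apply, mul_comm (Real.exp (y^2 * c^2 / 2))]
              exact mul_le_mul_of_nonneg_left hω (Real.exp_pos _).le
        _ = Real.exp (y^2 * c^2 / 2) * ∫ ω, f ω ∂μ := integral_const_mul _ _
      have hfint : Integrable f μ :=
        Integrable.mono' (integrable_const _) ((hfmeas.mono (ℱ.le n)).aestronglyMeasurable) hfbd
      have hfg_eq : (fun ω => Real.exp (y * ∑ k ∈ Finset.Icc 1 (n+1), Z k ω)) = f * g := by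
        funext ω
        show Real.exp (y * ∑ k ∈ Finset.Icc 1 (n+1), Z k ω)
            = Real.exp (y * ∑ k ∈ Finset.Icc 1 n, Z k ω) * Real.exp (y * Z (n+1) ω)
        rw [← Real.exp_add, hsumsplit ω]
        ring_nf
      have hint' : Integrable (fun ω => Real.exp (y * ∑ k ∈ Finset.Icc 1 (n+1), Z k ω)) μ := by
        rw [hfg_eq]; exact hfgint
      refine ⟨hmeas', hbd', hint', ?_⟩
      have hval : ∫ ω, Real.exp (y * ∑ k ∈ Finset.Icc 1 (n+1), Z k ω) ∂μ
          = ∫ ω, (f * g) ω ∂μ := by rw [hfg_eq]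
      rw [hval]
      calc ∫ ω, (f * g) ω ∂μ ≤ Real.exp (y^2 * c^2 / 2) * ∫ ω, f ω ∂μ := hstep
      _ ≤ Real.exp (y^2 * c^2 / 2) * Real.exp (n * (y^2 * c^2 / 2)) := by
            refine mul_le_mul_of_nonneg_left ?_ (Real.exp_pos _).le
            exact hSval
      _ = Real.exp ((n+1 : ℕ) * (y^2 * c^2 / 2)) := by
            rw [← Real.exp_add]; push_cast; ring_nf
  -- Chernoff step
  obtain ⟨hKmeas, hKbd, hKint, hKval⟩ := hmgf K le_rfl
  have hcher := ProbabilityTheory.measure_ge_le_exp_mul_mgf (μ := μ) (X := fun ω => ∑ k ∈ Finset.Icc 1 K, Z k ω)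
    (t := y) t hy0.le hKint
  have hmgfle : ProbabilityTheory.mgf (fun ω => ∑ k ∈ Finset.Icc 1 K, Z k ω) μ y ≤ Real.exp (K * (y^2 * c^2 / 2)) := hKval
  have hbound : Real.exp (-y * t) * ProbabilityTheory.mgf (fun ω => ∑ k ∈ Finset.Icc 1 K, Z k ω) μ y
      ≤ Real.exp (-t^2 / (2 * K * c^2)) := by
    calc Real.exp (-y * t) * ProbabilityTheory.mgf (fun ω => ∑ k ∈ Finset.Icc 1 K, Z k ω) μ y
        ≤ Real.exp (-y * t) * Real.exp (K * (y^2 * c^2 / 2)) :=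
          mul_le_mul_of_nonneg_left hmgfle (Real.exp_pos _).le
    _ = Real.exp (-t^2 / (2 * K * c^2)) := by
          rw [← Real.exp_add]
          congr 1
          rw [hy]
          field_simp
          ring
  have hne : μ {ω | t ≤ ∑ k ∈ Finset.Icc 1 K, Z k ω} ≠ ⊤ := measure_ne_top _ _
  rw [← ENNReal.ofReal_toReal hne]
  exact ENNReal.ofReal_le_ofReal (hcher.trans hbound)


private lemma aux_trunc_moment {Ω : Type*} {m0 : MeasurableSpace Ω} {μ : Measure Ω}
    [IsProbabilityMeasure μ] {f : Ω → ℝ} (hfm : AEStronglyMeasurable f μ)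
    (hfi : Integrable f μ) {τ M : ℝ} (hτ : 0 < τ) (hM : 0 ≤ M)
    (htail : ∀ m : ℝ, 0 ≤ m → μ {ω | m < |f ω|} ≤ ENNReal.ofReal (2 * Real.exp (-m / (4*τ)))) :
    ∫ ω, max (|f ω| - M) 0 ∂μ ≤ 8 * τ * Real.exp (-M / (4*τ)) := by
  set g : Ω → ℝ := fun ω => max (|f ω| - M) 0 with hg
  have hgnn : ∀ ω, 0 ≤ g ω := fun ω => le_max_right _ _
  have habs : AEMeasurable (fun ω => |f ω|) μ := by
    have h : (fun ω => |f ω|) = fun ω => max (f ω) (-(f ω)) := by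
      funext ω; exact abs_eq_max_neg
    rw [h]; exact hfm.aemeasurable.max hfm.aemeasurable.neg
  have hgae : AEMeasurable g μ :=
    (habs.sub aemeasurable_const).max aemeasurable_const
  have hgm : AEStronglyMeasurable g μ := hgae.aestronglyMeasurable
  have hgi : Integrable g μ := by
    refine Integrable.mono' hfi.abs hgm ?_
    filter_upwards with ω
    rw [Real.norm_eq_abs, abs_of_nonneg (hgnn ω)]
    have : |f ω| - M ≤ |f ω| := by linarith
    exact max_le this (abs_nonneg _)
  have lhs_eq : ENNReal.ofReal (∫ ω, g ω ∂μ) = ∫⁻ t in Ioi (0:ℝ), μ {ω | t < g ω} := by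
    rw [ofReal_integral_eq_lintegral_ofReal hgi (Filter.Eventually.of_forall hgnn)]
    exact lintegral_eq_lintegral_meas_lt μ (Filter.Eventually.of_forall hgnn) hgm.aemeasurable
  have hsets : ∀ t : ℝ, 0 < t → {ω | t < g ω} = {ω | M + t < |f ω|} := by
    intro t ht
    ext ω
    simp only [Set.mem_setOf_eq, hg, lt_max_iff]
    constructor
    · rintro (h | h)
      · linarith
      · linarith
    · intro h; left; linarith
  have step1 : ∫⁻ t in Ioi (0:ℝ), μ {ω | t < g ω}
      ≤ ∫⁻ t in Ioi (0:ℝ), ENNReal.ofReal (2 * Real.exp (-(M + t) / (4*τ))) := by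
    refine setLIntegral_mono ?_ ?_
    · exact (ENNReal.measurable_ofReal.comp ((measurable_const.mul
        (((measurable_const.add measurable_id').neg).div_const _).exp)))
    · intro t ht
      rw [hsets t ht]
      exact htail (M + t) (by simp only [Set.mem_Ioi] at ht; linarith)
  have hint : IntegrableOn (fun t : ℝ => 2 * Real.exp (-(M + t) / (4*τ))) (Ioi 0) := by
    have heq : (fun t : ℝ => 2 * Real.exp (-(M + t) / (4*τ)))
        = fun t : ℝ => (2 * Real.exp (-M / (4*τ))) * Real.exp (-((4*τ)⁻¹) * t) := by
      funext t
      rw [mul_assoc, ← Real.exp_add]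
      congr 2
      field_simp
      ring
    rw [heq]
    exact (exp_neg_integrableOn_Ioi 0 (by positivity)).const_mul _
  have step2 : ∫⁻ t in Ioi (0:ℝ), ENNReal.ofReal (2 * Real.exp (-(M + t) / (4*τ)))
      = ENNReal.ofReal (∫ t in Ioi (0:ℝ), 2 * Real.exp (-(M + t) / (4*τ))) := by
    rw [ofReal_integral_eq_lintegral_ofReal hint
      (Filter.Eventually.of_forall (fun t => by positivity))]
  have step3 : ∫ t in Ioi (0:ℝ), 2 * Real.exp (-(M + t) / (4*τ)) = 8 * τ * Real.exp (-M / (4*τ)) := by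
    have heq : (fun t : ℝ => 2 * Real.exp (-(M + t) / (4*τ)))
        = fun t : ℝ => (2 * Real.exp (-M / (4*τ))) * Real.exp (-((4*τ)⁻¹ * t)) := by
      funext t
      rw [mul_assoc, ← Real.exp_add]
      congr 2
      field_simp
      ring
    rw [heq, MeasureTheory.integral_const_mul]
    have := integral_comp_mul_left_Ioi (fun x => Real.exp (-x)) 0 (b := (4*τ)⁻¹) (by positivity)
    simp only [mul_zero] at this
    rw [this, integral_exp_neg_Ioi]
    simp only [neg_zero, Real.exp_zero, smul_eq_mul, mul_one]
    rw [inv_inv]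
    ring
  have : ENNReal.ofReal (∫ ω, g ω ∂μ) ≤ ENNReal.ofReal (8 * τ * Real.exp (-M / (4*τ))) := by
    rw [lhs_eq]
    rw [← step3, ← step2]
    exact step1
  rwa [ENNReal.ofReal_le_ofReal_iff (by positivity)] at this


set_option maxHeartbeats 2000000 in
/-- Anytime one-sided Azuma-type bound for martingale difference sequences with
exponential tails of the form `2 exp(-m/(4τ))`. -/
theorem anytime_azuma_tau
    {Ω : Type*} {m0 : MeasurableSpace Ω} {μ : Measure Ω} [IsProbabilityMeasure μ]
    (ℱ : Filtration ℕ m0) (X : ℕ → Ω → ℝ)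
    (hmeas : ∀ k, 1 ≤ k → StronglyMeasurable[ℱ k] (X k))
    (hint : ∀ k, 1 ≤ k → Integrable (X k) μ)
    (hmds : ∀ k, 1 ≤ k → μ[X k | ℱ (k - 1)] =ᵐ[μ] 0)
    (τ : ℝ) (hτ : 0 < τ)
    (htail : ∀ k, 1 ≤ k → ∀ m : ℝ, 0 ≤ m →
      μ {ω | m < |X k ω|} ≤ ENNReal.ofReal (2 * Real.exp (-m / (4 * τ))))
    (δ : ℝ) (hδ0 : 0 < δ) (hδ1 : δ < 1) :
    ENNReal.ofReal (1 - δ) ≤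
      μ {ω | ∀ K : ℕ, 1 ≤ K →
        ∑ k ∈ Finset.Icc 1 K, X k ω ≤
          44 * τ * Real.sqrt (K * (Real.log (4 * K / δ)) ^ 3)} := by
  classical
  set L : ℕ → ℝ := fun K => Real.log (4 * K / δ) with hLdef
  set M : ℕ → ℝ := fun K => 12 * τ * L K with hMdef
  set u : ℕ → ℝ := fun K => Real.sqrt (K * (L K)^3) with hudef
  set Y : ℕ → ℕ → Ω → ℝ := fun K k ω => max (-(M K)) (min (M K) (X k ω)) with hYdef
  set R : ℕ → ℕ → Ω → ℝ := fun K k => μ[Y K k | ℱ (k-1)] with hRdef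
  set Z : ℕ → ℕ → Ω → ℝ := fun K k ω => Y K k ω - R K k ω with hZdef
  set Bad : ℕ → Set Ω := fun K =>
    if K = 0 then (∅ : Set Ω) else
      ({ω | ∃ k ∈ Finset.Icc 1 K, M K < |X k ω|} ∪
       ({ω | 42 * τ * u K ≤ ∑ k ∈ Finset.Icc 1 K, Z K k ω} ∪
        {ω | 2 * τ * u K ≤ ∑ k ∈ Finset.Icc 1 K, R K k ω})) with hBaddef
  -- basic numeric facts
  have hL1 : ∀ K : ℕ, 1 ≤ K → 1 ≤ L K := by
    intro K hK
    have hKR : (1:ℝ) ≤ K := by exact_mod_cast hK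
    have h4K : (0:ℝ) < 4 * K / δ := by positivity
    rw [hLdef]
    simp only []
    rw [Real.le_log_iff_exp_le h4K]
    have h1 : Real.exp 1 ≤ 4 := by
      have := Real.exp_one_lt_d9
      linarith
    have h3 : 4 * (K:ℝ) ≤ 4 * K / δ := by
      rw [le_div_iff₀ hδ0]
      nlinarith
    linarith
  have hexp3 : ∀ K : ℕ, 1 ≤ K → Real.exp (-(3 * L K)) = (δ / (4*K))^3 := by
    intro K hK
    have hKR : (1:ℝ) ≤ K := by exact_mod_cast hK
    have h4K : (0:ℝ) < 4 * K / δ := by positivity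
    have hlog : Real.exp (L K) = 4 * K / δ := Real.exp_log h4K
    have h1 : Real.exp (-(L K)) = δ / (4*K) := by
      rw [Real.exp_neg, hlog, inv_div]
    rw [show -(3 * L K) = (-(L K)) + ((-(L K)) + (-(L K))) by ring, Real.exp_add, Real.exp_add, h1]
    ring
  have hu1 : ∀ K : ℕ, 1 ≤ K → 1 ≤ u K := by
    intro K hK
    have hKR : (1:ℝ) ≤ K := by exact_mod_cast hK
    have hL := hL1 K hK
    have hL3 : (1:ℝ)^3 ≤ (L K)^3 := pow_le_pow_left₀ zero_le_one hL 3
    have h1 : (1:ℝ) ≤ K * (L K)^3 := by nlinarith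
    rw [hudef]
    simp only []
    rw [show (1:ℝ) = Real.sqrt 1 from (Real.sqrt_one).symm]
    exact Real.sqrt_le_sqrt h1
  have hsqK : ∀ K : ℕ, 1 ≤ K → Real.sqrt K ≤ (K:ℝ) := by
    intro K hK
    have hKR : (1:ℝ) ≤ K := by exact_mod_cast hK
    calc Real.sqrt K ≤ Real.sqrt ((K:ℝ)^2) := Real.sqrt_le_sqrt (by nlinarith)
    _ = K := Real.sqrt_sq (by linarith)
  -- truncation facts
  have hMpos : ∀ K : ℕ, 1 ≤ K → 0 < M K := by
    intro K hK
    have := hL1 K hK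
    rw [hMdef]
    simp only []
    nlinarith
  have hYbd : ∀ K k : ℕ, 1 ≤ K → ∀ ω, |Y K k ω| ≤ M K := by
    intro K k hK ω
    have hM := (hMpos K hK).le
    rw [abs_le]
    constructor
    · exact le_max_left _ _
    · exact max_le (by linarith) (min_le_left _ _)
  have hYmeas : ∀ K k : ℕ, 1 ≤ K → 1 ≤ k → StronglyMeasurable[ℱ k] (Y K k) := by
    intro K k hK hk
    have hcont : Continuous (fun x : ℝ => max (-(M K)) (min (M K) x)) :=
      continuous_const.max (continuous_const.min continuous_id)
    exact hcont.comp_stronglyMeasurable (hmeas k hk)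
  have hYint : ∀ K k : ℕ, 1 ≤ K → 1 ≤ k → Integrable (Y K k) μ := by
    intro K k hK hk
    refine Integrable.mono' (integrable_const (M K))
      ((hYmeas K k hK hk).mono (ℱ.le k)).aestronglyMeasurable ?_
    filter_upwards with ω
    rw [Real.norm_eq_abs]
    exact hYbd K k hK ω
  have hRbd : ∀ K k : ℕ, 1 ≤ K → 1 ≤ k → ∀ᵐ ω ∂μ, |R K k ω| ≤ M K := by
    intro K k hK hk
    have hM := (hMpos K hK).le
    have h := ae_bdd_condExp_of_ae_bdd (μ := μ) (m := ℱ (k-1)) (R := (M K).toNNReal)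
      (f := Y K k) ?_
    · filter_upwards [h] with ω hω
      rwa [Real.coe_toNNReal _ hM] at hω
    · filter_upwards with ω
      rw [Real.coe_toNNReal _ hM]
      exact hYbd K k hK ω
  have hZmeas : ∀ K k : ℕ, 1 ≤ K → 1 ≤ k → StronglyMeasurable[ℱ k] (Z K k) := by
    intro K k hK hk
    exact (hYmeas K k hK hk).sub (stronglyMeasurable_condExp.mono (ℱ.mono (Nat.sub_le k 1)))
  have hZbd : ∀ K k : ℕ, 1 ≤ K → 1 ≤ k → ∀ᵐ ω ∂μ, |Z K k ω| ≤ 2 * M K := by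
    intro K k hK hk
    filter_upwards [hRbd K k hK hk] with ω hω
    calc |Z K k ω| ≤ |Y K k ω| + |R K k ω| := abs_sub _ _
    _ ≤ M K + M K := add_le_add (hYbd K k hK ω) hω
    _ = 2 * M K := by ring
  have hZ0 : ∀ K k : ℕ, 1 ≤ K → 1 ≤ k → μ[Z K k | ℱ (k-1)] =ᵐ[μ] 0 := by
    intro K k hK hk
    have h1 : μ[Z K k | ℱ (k-1)] =ᵐ[μ] μ[Y K k | ℱ (k-1)] - μ[R K k | ℱ (k-1)] :=
      condExp_sub (hYint K k hK hk) integrable_condExp _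
    have h2 : μ[R K k | ℱ (k-1)] = R K k :=
      condExp_of_stronglyMeasurable (ℱ.le (k-1)) stronglyMeasurable_condExp integrable_condExp
    filter_upwards [h1] with ω hω
    rw [Pi.zero_apply, hω, Pi.sub_apply, h2]
    rw [hRdef]
    simp
  have hRabs : ∀ K k : ℕ, 1 ≤ K → 1 ≤ k →
      ∫ ω, |R K k ω| ∂μ ≤ 8 * τ * Real.exp (-(3 * L K)) := by
    intro K k hK hk
    have hM := (hMpos K hK).le
    have hgint : Integrable (fun ω => Y K k ω - X k ω) μ := (hYint K k hK hk).sub (hint k hk)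
    have hRrep : μ[fun ω => Y K k ω - X k ω | ℱ (k-1)] =ᵐ[μ] R K k := by
      have h1 : μ[fun ω => Y K k ω - X k ω | ℱ (k-1)]
          =ᵐ[μ] μ[Y K k | ℱ (k-1)] - μ[X k | ℱ (k-1)] :=
        condExp_sub (hYint K k hK hk) (hint k hk) _
      filter_upwards [h1, hmds k hk] with ω h h'
      rw [h, Pi.sub_apply, h', Pi.zero_apply, sub_zero, hRdef]
    have habs : ∀ᵐ ω ∂μ, |R K k ω| ≤ (μ[fun ω => |Y K k ω - X k ω| | ℱ (k-1)]) ω := by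
      have hup : μ[fun ω => Y K k ω - X k ω | ℱ (k-1)]
          ≤ᵐ[μ] μ[fun ω => |Y K k ω - X k ω| | ℱ (k-1)] :=
        condExp_mono hgint hgint.abs (Filter.Eventually.of_forall fun ω => le_abs_self _)
      have hdown : μ[fun ω => -(Y K k ω - X k ω) | ℱ (k-1)]
          ≤ᵐ[μ] μ[fun ω => |Y K k ω - X k ω| | ℱ (k-1)] :=
        condExp_mono hgint.neg hgint.abs (Filter.Eventually.of_forall fun ω => by
          have := neg_abs_le (Y K k ω - X k ω); simp only []; linarith)
      have hneg : μ[fun ω => -(Y K k ω - X k ω) | ℱ (k-1)]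
          =ᵐ[μ] -μ[fun ω => Y K k ω - X k ω | ℱ (k-1)] := condExp_neg _ _
      filter_upwards [hup, hdown, hneg, hRrep] with ω h1 h2 h3 h4
      rw [abs_le, ← h4]
      constructor
      · rw [h3] at h2
        simp only [Pi.neg_apply] at h2
        linarith
      · exact h1
    have hle1 : ∫ ω, |R K k ω| ∂μ ≤ ∫ ω, (μ[fun ω => |Y K k ω - X k ω| | ℱ (k-1)]) ω ∂μ :=
      integral_mono_ae integrable_condExp.abs integrable_condExp habs
    have hle2 : ∫ ω, (μ[fun ω => |Y K k ω - X k ω| | ℱ (k-1)]) ω ∂μ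
        = ∫ ω, |Y K k ω - X k ω| ∂μ := integral_condExp (ℱ.le (k-1))
    have hle3 : ∫ ω, |Y K k ω - X k ω| ∂μ = ∫ ω, max (|X k ω| - M K) 0 ∂μ := by
      refine integral_congr_ae (Filter.Eventually.of_forall fun ω => ?_)
      rw [hYdef]
      exact aux_clamp_abs hM
    have hle4 : ∫ ω, max (|X k ω| - M K) 0 ∂μ ≤ 8 * τ * Real.exp (-(M K) / (4*τ)) :=
      aux_trunc_moment ((hmeas k hk).mono (ℱ.le k)).aestronglyMeasurable (hint k hk) hτ hM
        (htail k hk)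
    have hexpeq : -(M K) / (4*τ) = -(3 * L K) := by
      rw [hMdef]
      field_simp
      ring
    rw [hexpeq] at hle4
    linarith [hle1, hle2.le, hle3.le, hle4]
  -- measure of the truncation event
  have hT : ∀ K : ℕ, 1 ≤ K →
      μ {ω | ∃ k ∈ Finset.Icc 1 K, M K < |X k ω|}
        ≤ ENNReal.ofReal (δ / (32 * (K * Real.sqrt K))) := by
    intro K hK
    have hKR : (1:ℝ) ≤ K := by exact_mod_cast hK
    have hKpos : (0:ℝ) < K := by linarith
    have hsq := hsqK K hK
    have hsqpos : (0:ℝ) < Real.sqrt K := Real.sqrt_pos.2 hKpos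
    have hset : {ω | ∃ k ∈ Finset.Icc 1 K, M K < |X k ω|}
        = ⋃ k ∈ Finset.Icc 1 K, {ω | M K < |X k ω|} := by
      ext ω
      simp
    rw [hset]
    calc μ (⋃ k ∈ Finset.Icc 1 K, {ω | M K < |X k ω|})
        ≤ ∑ k ∈ Finset.Icc 1 K, μ {ω | M K < |X k ω|} :=
          measure_biUnion_finset_le _ _
    _ ≤ ∑ k ∈ Finset.Icc 1 K, ENNReal.ofReal (2 * Real.exp (-(M K) / (4 * τ))) := by
          refine Finset.sum_le_sum fun k hk => ?_
          have hk1 : 1 ≤ k := (Finset.mem_Icc.1 hk).1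
          exact htail k hk1 (M K) (hMpos K hK).le
    _ = (K : ℝ≥0∞) * ENNReal.ofReal (2 * Real.exp (-(M K) / (4 * τ))) := by
          rw [Finset.sum_const, Nat.card_Icc]
          simp [nsmul_eq_mul]
    _ ≤ ENNReal.ofReal (δ / (32 * (K * Real.sqrt K))) := by
          rw [← ENNReal.ofReal_natCast K, ← ENNReal.ofReal_mul (by positivity)]
          refine ENNReal.ofReal_le_ofReal ?_
          have hexpeq : -(M K) / (4*τ) = -(3 * L K) := by
            rw [hMdef]; field_simp; ring
          rw [hexpeq, hexp3 K hK]
          have key : (K:ℝ) * (2 * (δ / (4*K))^3) = δ^3 / (32 * K^2) := by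
            field_simp
            ring
          rw [key]
          rw [div_le_div_iff₀ (by positivity) (by positivity)]
          have hδsq : δ^2 ≤ 1 := by nlinarith
          have hδ3 : δ^3 ≤ δ := by nlinarith
          have h32 : (32:ℝ) * (K * Real.sqrt K) ≤ 32 * K^2 := by nlinarith
          nlinarith [mul_le_mul hδ3 h32 (by positivity) hδ0.le]
  -- measure of the Azuma event
  have hA : ∀ K : ℕ, 1 ≤ K →
      μ {ω | 42 * τ * u K ≤ ∑ k ∈ Finset.Icc 1 K, Z K k ω}
        ≤ ENNReal.ofReal (δ / (8 * (K * Real.sqrt K))) := by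
    intro K hK
    have hKR : (1:ℝ) ≤ K := by exact_mod_cast hK
    have hKpos : (0:ℝ) < K := by linarith
    have hL := hL1 K hK
    have hMp := hMpos K hK
    have hup : 0 < u K := lt_of_lt_of_le one_pos (hu1 K hK)
    have ht : (0:ℝ) < 42 * τ * u K := by positivity
    have hazuma := aux_azuma ℱ (Z K) (c := 2 * M K) (by positivity) K hK
      (fun k hk _ => hZmeas K k hK hk) (fun k hk _ => hZbd K k hK hk)
      (fun k hk _ => hZ0 K k hK hk) ht
    refine hazuma.trans (ENNReal.ofReal_le_ofReal ?_)
    have hu2 : (u K)^2 = K * (L K)^3 := by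
      rw [hudef]
      exact Real.sq_sqrt (by positivity)
    have hexpo : -(42 * τ * u K)^2 / (2 * K * (2 * M K)^2) = -(49/32 * L K) := by
      rw [mul_pow, mul_pow, hu2, hMdef]
      simp only []
      field_simp
      ring
    rw [hexpo]
    calc Real.exp (-(49/32 * L K)) ≤ Real.exp (-(3/2 * L K)) := by
          rw [Real.exp_le_exp]
          nlinarith
    _ = Real.sqrt (Real.exp (-(3 * L K))) := by
          rw [← Real.exp_half]
          congr 1
          ring
    _ = Real.sqrt ((δ / (4*K))^3) := by rw [hexp3 K hK]
    _ ≤ δ / (8 * (K * Real.sqrt K)) := by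
          have h1 : ((δ / (4*K)):ℝ)^3 = (δ / (4*K))^2 * (δ / (4*K)) := by ring
          rw [h1, Real.sqrt_mul (sq_nonneg _), Real.sqrt_sq (by positivity)]
          have h2 : Real.sqrt (δ / (4*K)) ≤ Real.sqrt (1 / (4*K)) := by
            refine Real.sqrt_le_sqrt ?_
            rw [div_le_div_iff₀ (by positivity) (by positivity)]
            nlinarith
          have h3 : Real.sqrt (1 / (4*K)) = 1 / (2 * Real.sqrt K) := by
            rw [one_div, Real.sqrt_inv, show (4:ℝ)*K = 2^2 * K by ring,
              Real.sqrt_mul (by positivity), Real.sqrt_sq (by norm_num)]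
            rw [one_div, mul_comm]
          calc δ / (4*K) * Real.sqrt (δ / (4*K)) ≤ δ / (4*K) * (1 / (2 * Real.sqrt K)) := by
                refine mul_le_mul_of_nonneg_left (h2.trans_eq h3) (by positivity)
          _ = δ / (8 * (K * Real.sqrt K)) := by
                rw [div_mul_div_comm, mul_one]
                congr 1
                ring
  -- measure of the drift event
  have hD : ∀ K : ℕ, 1 ≤ K →
      μ {ω | 2 * τ * u K ≤ ∑ k ∈ Finset.Icc 1 K, R K k ω}
        ≤ ENNReal.ofReal (δ / (16 * (K * Real.sqrt K))) := by
    intro K hK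
    have hKR : (1:ℝ) ≤ K := by exact_mod_cast hK
    have hKpos : (0:ℝ) < K := by linarith
    have hu := hu1 K hK
    have hup : (0:ℝ) < u K := lt_of_lt_of_le one_pos hu
    have htu : (0:ℝ) < 2 * τ * u K := by positivity
    have hsq := hsqK K hK
    have hsqpos : (0:ℝ) < Real.sqrt K := Real.sqrt_pos.2 hKpos
    set D : Ω → ℝ := fun ω => ∑ k ∈ Finset.Icc 1 K, R K k ω with hDdef
    have hRmeas : ∀ k : ℕ, Measurable[m0] (R K k) := fun k =>
      (stronglyMeasurable_condExp.mono (ℱ.le (k-1))).measurable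
    have hDae : AEMeasurable (fun ω => ENNReal.ofReal (D ω)) μ := by
      refine ENNReal.measurable_ofReal.comp_aemeasurable ?_
      exact (Finset.measurable_sum (Finset.Icc 1 K) fun k _ => hRmeas k).aemeasurable
    have hmarkov := mul_meas_ge_le_lintegral₀ hDae (ENNReal.ofReal (2 * τ * u K))
    have hsub : {ω | 2 * τ * u K ≤ D ω}
        ⊆ {ω | ENNReal.ofReal (2 * τ * u K) ≤ ENNReal.ofReal (D ω)} := fun ω hω =>
      ENNReal.ofReal_le_ofReal hω
    have hlint : ∫⁻ ω, ENNReal.ofReal (D ω) ∂μ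
        ≤ ENNReal.ofReal (K * (8 * τ * Real.exp (-(3 * L K)))) := by
      have h1 : ∫⁻ ω, ENNReal.ofReal (D ω) ∂μ
          ≤ ∫⁻ ω, ∑ k ∈ Finset.Icc 1 K, ENNReal.ofReal |R K k ω| ∂μ := by
        refine lintegral_mono fun ω => ?_
        rw [← ENNReal.ofReal_sum_of_nonneg (fun k _ => abs_nonneg _)]
        refine ENNReal.ofReal_le_ofReal ?_
        exact Finset.sum_le_sum fun k _ => le_abs_self _
      have h2 : ∫⁻ ω, ∑ k ∈ Finset.Icc 1 K, ENNReal.ofReal |R K k ω| ∂μ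
          = ∑ k ∈ Finset.Icc 1 K, ∫⁻ ω, ENNReal.ofReal |R K k ω| ∂μ :=
        lintegral_finset_sum _ (fun k _ => (hRmeas k).abs.ennreal_ofReal
          )
      have h3 : ∀ k ∈ Finset.Icc 1 K, ∫⁻ ω, ENNReal.ofReal |R K k ω| ∂μ
          ≤ ENNReal.ofReal (8 * τ * Real.exp (-(3 * L K))) := by
        intro k hk
        have hk1 : 1 ≤ k := (Finset.mem_Icc.1 hk).1
        rw [← ofReal_integral_eq_lintegral_ofReal integrable_condExp.abs
          (Filter.Eventually.of_forall fun ω => abs_nonneg _)]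
        exact ENNReal.ofReal_le_ofReal (hRabs K k hK hk1)
      calc ∫⁻ ω, ENNReal.ofReal (D ω) ∂μ
          ≤ ∑ k ∈ Finset.Icc 1 K, ∫⁻ ω, ENNReal.ofReal |R K k ω| ∂μ := h1.trans_eq h2
      _ ≤ ∑ k ∈ Finset.Icc 1 K, ENNReal.ofReal (8 * τ * Real.exp (-(3 * L K))) :=
            Finset.sum_le_sum h3
      _ = (K : ℝ≥0∞) * ENNReal.ofReal (8 * τ * Real.exp (-(3 * L K))) := by
            rw [Finset.sum_const, Nat.card_Icc]
            simp [nsmul_eq_mul]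
      _ = ENNReal.ofReal (K * (8 * τ * Real.exp (-(3 * L K)))) := by
            rw [← ENNReal.ofReal_natCast K, ← ENNReal.ofReal_mul (by positivity)]
    calc μ {ω | 2 * τ * u K ≤ D ω}
        ≤ μ {ω | ENNReal.ofReal (2 * τ * u K) ≤ ENNReal.ofReal (D ω)} := measure_mono hsub
    _ ≤ ENNReal.ofReal (K * (8 * τ * Real.exp (-(3 * L K)))) / ENNReal.ofReal (2 * τ * u K) := by
          rw [ENNReal.le_div_iff_mul_le (Or.inl (by simp [ENNReal.ofReal_eq_zero]; linarith))
            (Or.inl ENNReal.ofReal_ne_top)]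
          rw [mul_comm]
          exact hmarkov.trans hlint
    _ = ENNReal.ofReal (K * (8 * τ * Real.exp (-(3 * L K))) / (2 * τ * u K)) := by
          rw [ENNReal.ofReal_div_of_pos htu]
    _ ≤ ENNReal.ofReal (δ / (16 * (K * Real.sqrt K))) := by
          refine ENNReal.ofReal_le_ofReal ?_
          rw [hexp3 K hK]
          have key : (K:ℝ) * (8 * τ * (δ / (4*K))^3) / (2 * τ * u K)
              = (δ^3 / (16 * K^2)) / u K := by
            field_simp
            ring
          rw [key]
          have hstep1 : (δ^3 / (16 * K^2)) / u K ≤ δ^3 / (16 * K^2) := by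
            refine div_le_self (by positivity) hu
          refine hstep1.trans ?_
          rw [div_le_div_iff₀ (by positivity) (by positivity)]
          have hδsq : δ^2 ≤ 1 := by nlinarith
          have hδ3 : δ^3 ≤ δ := by nlinarith
          have h32 : (16:ℝ) * (K * Real.sqrt K) ≤ 16 * K^2 := by nlinarith
          nlinarith [mul_le_mul hδ3 h32 (by positivity) hδ0.le]
  -- combine the three events
  have hBadK : ∀ K : ℕ, μ (Bad K) ≤ ENNReal.ofReal (7 * δ / 32 * (1 / (K * Real.sqrt K))) := by
    intro K
    rcases Nat.eq_zero_or_pos K with h0 | hK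
    · subst h0
      simp only [hBaddef, if_pos rfl]
      simp
    · have hKR : (1:ℝ) ≤ K := by exact_mod_cast hK
      have hKpos : (0:ℝ) < K := by linarith
      have hsqpos : (0:ℝ) < Real.sqrt K := Real.sqrt_pos.2 hKpos
      have hBK : Bad K = ({ω | ∃ k ∈ Finset.Icc 1 K, M K < |X k ω|} ∪
       ({ω | 42 * τ * u K ≤ ∑ k ∈ Finset.Icc 1 K, Z K k ω} ∪
        {ω | 2 * τ * u K ≤ ∑ k ∈ Finset.Icc 1 K, R K k ω})) := by
        rw [hBaddef]
        simp only [if_neg (Nat.pos_iff_ne_zero.1 hK)]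
      rw [hBK]
      calc μ _ ≤ μ {ω | ∃ k ∈ Finset.Icc 1 K, M K < |X k ω|} +
          μ ({ω | 42 * τ * u K ≤ ∑ k ∈ Finset.Icc 1 K, Z K k ω} ∪
            {ω | 2 * τ * u K ≤ ∑ k ∈ Finset.Icc 1 K, R K k ω}) := measure_union_le _ _
      _ ≤ μ {ω | ∃ k ∈ Finset.Icc 1 K, M K < |X k ω|} +
          (μ {ω | 42 * τ * u K ≤ ∑ k ∈ Finset.Icc 1 K, Z K k ω} +
           μ {ω | 2 * τ * u K ≤ ∑ k ∈ Finset.Icc 1 K, R K k ω}) := by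
            exact add_le_add le_rfl (measure_union_le _ _)
      _ ≤ ENNReal.ofReal (δ / (32 * (K * Real.sqrt K))) +
          (ENNReal.ofReal (δ / (8 * (K * Real.sqrt K))) +
           ENNReal.ofReal (δ / (16 * (K * Real.sqrt K)))) := by
            exact add_le_add (hT K hK) (add_le_add (hA K hK) (hD K hK))
      _ = ENNReal.ofReal (δ / (32 * (K * Real.sqrt K)) +
          (δ / (8 * (K * Real.sqrt K)) + δ / (16 * (K * Real.sqrt K)))) := by
            rw [ENNReal.ofReal_add (by positivity) (by positivity),
              ENNReal.ofReal_add (by positivity) (by positivity)]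
      _ = ENNReal.ofReal (7 * δ / 32 * (1 / (K * Real.sqrt K))) := by
            congr 1
            field_simp
            ring
  -- union bound
  have hUnion : μ (⋃ K, Bad K) ≤ ENNReal.ofReal δ := by
    calc μ (⋃ K, Bad K) ≤ ∑' K, μ (Bad K) := measure_iUnion_le _
    _ ≤ ∑' K : ℕ, ENNReal.ofReal (7 * δ / 32 * (1 / (K * Real.sqrt K))) :=
          ENNReal.tsum_le_tsum hBadK
    _ ≤ ENNReal.ofReal δ := by
          rw [ENNReal.tsum_eq_iSup_sum]
          refine iSup_le fun s => ?_
          rw [← ENNReal.ofReal_sum_of_nonneg (fun i _ => by positivity)]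
          refine ENNReal.ofReal_le_ofReal ?_
          have hsum : ∑ K ∈ s, (1 / ((K:ℝ) * Real.sqrt K)) ≤ 3 := by
            have hsub : s ⊆ Finset.Icc 0 (s.sup id) := fun x hx => by
              simp only [Finset.mem_Icc]
              exact ⟨Nat.zero_le _, Finset.le_sup (f := id) hx⟩
            calc ∑ K ∈ s, (1 / ((K:ℝ) * Real.sqrt K))
                ≤ ∑ K ∈ Finset.Icc 0 (s.sup id), (1 / ((K:ℝ) * Real.sqrt K)) :=
                  Finset.sum_le_sum_of_subset_of_nonneg hsub (fun i _ _ => by positivity)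
            _ = ∑ K ∈ Finset.Icc 1 (s.sup id), (1 / ((K:ℝ) * Real.sqrt K)) := by
                  have hins : Finset.Icc 0 (s.sup id) = insert 0 (Finset.Icc 1 (s.sup id)) := by
                    ext x
                    simp only [Finset.mem_Icc, Finset.mem_insert]
                    omega
                  rw [hins, Finset.sum_insert (by simp)]
                  simp
            _ ≤ 3 := aux_sqrt_sum_le _
          calc ∑ K ∈ s, 7 * δ / 32 * (1 / ((K:ℝ) * Real.sqrt K))
              = 7 * δ / 32 * ∑ K ∈ s, (1 / ((K:ℝ) * Real.sqrt K)) := by rw [Finset.mul_sum]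
          _ ≤ 7 * δ / 32 * 3 := by nlinarith
          _ ≤ δ := by nlinarith
  -- pointwise: outside the bad events the desired bound holds
  have hcover : ∀ ω, ω ∉ (⋃ K, Bad K) → ω ∈ {ω | ∀ K : ℕ, 1 ≤ K →
      ∑ k ∈ Finset.Icc 1 K, X k ω ≤
        44 * τ * Real.sqrt (K * (Real.log (4 * K / δ)) ^ 3)} := by
    intro ω hω K hK
    have hωK : ω ∉ Bad K := fun h => hω (Set.mem_iUnion.2 ⟨K, h⟩)
    have hBK : Bad K = ({ω | ∃ k ∈ Finset.Icc 1 K, M K < |X k ω|} ∪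
       ({ω | 42 * τ * u K ≤ ∑ k ∈ Finset.Icc 1 K, Z K k ω} ∪
        {ω | 2 * τ * u K ≤ ∑ k ∈ Finset.Icc 1 K, R K k ω})) := by
      rw [hBaddef]
      simp only [if_neg (Nat.pos_iff_ne_zero.1 hK)]
    rw [hBK] at hωK
    simp only [Set.mem_union, not_or, Set.mem_setOf_eq] at hωK
    obtain ⟨h1, h2, h3⟩ := hωK
    push_neg at h1 h2 h3
    have hXY : ∀ k ∈ Finset.Icc 1 K, X k ω = Y K k ω := by
      intro k hk
      obtain ⟨hl, hr⟩ := abs_le.1 (h1 k hk)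
      rw [hYdef]
      simp only []
      rw [min_eq_right hr, max_eq_right hl]
    have hsum : ∑ k ∈ Finset.Icc 1 K, X k ω = (∑ k ∈ Finset.Icc 1 K, Z K k ω)
        + ∑ k ∈ Finset.Icc 1 K, R K k ω := by
      rw [← Finset.sum_add_distrib]
      refine Finset.sum_congr rfl fun k hk => ?_
      rw [hXY k hk, hZdef]
      simp only []
      ring
    show ∑ k ∈ Finset.Icc 1 K, X k ω ≤ 44 * τ * Real.sqrt ((K:ℝ) * (Real.log (4 * K / δ)) ^ 3)
    have hgoal : (44:ℝ) * τ * Real.sqrt ((K:ℝ) * (Real.log (4 * K / δ)) ^ 3) = 44 * τ * u K := rfl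
    rw [hgoal, hsum]
    have hb2 : ∑ k ∈ Finset.Icc 1 K, Z K k ω < 42 * τ * u K := h2
    have hb3 : ∑ k ∈ Finset.Icc 1 K, R K k ω < 2 * τ * u K := h3
    linarith
  -- conclude
  have hsubuniv : (Set.univ : Set Ω) ⊆ {ω | ∀ K : ℕ, 1 ≤ K →
      ∑ k ∈ Finset.Icc 1 K, X k ω ≤
        44 * τ * Real.sqrt (K * (Real.log (4 * K / δ)) ^ 3)} ∪ (⋃ K, Bad K) := by
    intro ω _
    by_cases h : ω ∈ ⋃ K, Bad K
    · exact Set.mem_union_right _ h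
    · exact Set.mem_union_left _ (hcover ω h)
  have hone : (1:ℝ≥0∞) ≤ μ {ω | ∀ K : ℕ, 1 ≤ K →
      ∑ k ∈ Finset.Icc 1 K, X k ω ≤
        44 * τ * Real.sqrt (K * (Real.log (4 * K / δ)) ^ 3)} + ENNReal.ofReal δ := by
    calc (1:ℝ≥0∞) = μ Set.univ := measure_univ.symm
    _ ≤ μ ({ω | ∀ K : ℕ, 1 ≤ K →
          ∑ k ∈ Finset.Icc 1 K, X k ω ≤
            44 * τ * Real.sqrt (K * (Real.log (4 * K / δ)) ^ 3)} ∪ (⋃ K, Bad K)) :=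
          measure_mono hsubuniv
    _ ≤ μ {ω | ∀ K : ℕ, 1 ≤ K →
          ∑ k ∈ Finset.Icc 1 K, X k ω ≤
            44 * τ * Real.sqrt (K * (Real.log (4 * K / δ)) ^ 3)} + μ (⋃ K, Bad K) :=
          measure_union_le _ _
    _ ≤ _ := add_le_add le_rfl hUnion
  have hfin : ENNReal.ofReal (1 - δ) + ENNReal.ofReal δ ≤ μ {ω | ∀ K : ℕ, 1 ≤ K →
      ∑ k ∈ Finset.Icc 1 K, X k ω ≤
        44 * τ * Real.sqrt (K * (Real.log (4 * K / δ)) ^ 3)} + ENNReal.ofReal δ := by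
    rw [← ENNReal.ofReal_add (by linarith) hδ0.le]
    have : (1 - δ) + δ = 1 := by ring
    rw [this, ENNReal.ofReal_one]
    exact hone
  exact (ENNReal.add_le_add_iff_right ENNReal.ofReal_ne_top).1 hfin
end

section
/- First-order optimality bound for the entropy minimizer: Let ι be a finite index set, C a convex subset of the functions ι → ℝ, and R(q) = ∑_{i∈ι} ( q(i)·log(q(i)) − q(i) ) the unnormalized negative entropy (with convention 0·log 0 = 0). Suppose q₁ ∈ C satisfies q₁(i) > 0 for all i and R(q₁) ≤ R(q) for all q ∈ C. Then for every nonnegative q* ∈ C: KL(q*‖q₁) ≤ R(q*) − R(q₁), where KL(q‖p) = ∑_{i∈ι} ( q(i)·log(q(i)/p(i)) + p(i) − q(i) ). -/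
open Finset

/-- First-order optimality bound for the entropy minimizer: if `q₁` is a strictly
positive minimizer of the unnormalized negative entropy `R` over a convex set `C`,
then for every nonnegative `q* ∈ C`, `KL(q*‖q₁) ≤ R(q*) - R(q₁)`. -/
theorem kl_le_entropy_diff
    {ι : Type*} [Fintype ι] (C : Set (ι → ℝ)) (hC : Convex ℝ C)
    (q₁ : ι → ℝ) (hq₁C : q₁ ∈ C) (hq₁pos : ∀ i, 0 < q₁ i)
    (hmin : ∀ q ∈ C,
      ∑ i, (q₁ i * Real.log (q₁ i) - q₁ i) ≤ ∑ i, (q i * Real.log (q i) - q i))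
    (qs : ι → ℝ) (hqsC : qs ∈ C) (hqs : ∀ i, 0 ≤ qs i) :
    ∑ i, (qs i * Real.log (qs i / q₁ i) + q₁ i - qs i) ≤
      (∑ i, (qs i * Real.log (qs i) - qs i)) -
        ∑ i, (q₁ i * Real.log (q₁ i) - q₁ i) := by
  set d : ι → ℝ := fun i => qs i - q₁ i with hd
  set φ : ℝ → ℝ := fun t =>
    ∑ i, ((q₁ i + t * d i) * Real.log (q₁ i + t * d i) - (q₁ i + t * d i)) with hφ
  have hderiv : HasDerivAt φ (∑ i, d i * Real.log (q₁ i)) 0 := by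
    apply HasDerivAt.fun_sum
    intro i _
    have hg : HasDerivAt (fun t : ℝ => q₁ i + t * d i) (d i) 0 := by
      simpa using ((hasDerivAt_id (0:ℝ)).mul_const (d i)).const_add (q₁ i)
    have hne : (q₁ i + 0 * d i) ≠ 0 := by simpa using (hq₁pos i).ne'
    have h1 : HasDerivAt (fun t : ℝ => (q₁ i + t * d i) * Real.log (q₁ i + t * d i))
        ((Real.log (q₁ i + 0 * d i) + 1) * d i) 0 :=
      by have := (Real.hasDerivAt_mul_log hne).comp 0 hg; exact this
    have h2 := h1.fun_sub hg
    convert h2 using 1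
    simp
    ring
  have hmono : ∀ t ∈ Set.Ioc (0:ℝ) 1, φ 0 ≤ φ t := by
    intro t ht
    have hmem : (fun i => q₁ i + t * d i) ∈ C := by
      have h := hC hq₁C hqsC (by linarith [ht.1, ht.2] : (0:ℝ) ≤ 1 - t)
        (le_of_lt ht.1) (by ring)
      convert h using 1
      funext i
      simp [hd]
      ring
    have := hmin _ hmem
    simpa [hφ] using this
  have key : 0 ≤ ∑ i, d i * Real.log (q₁ i) := by
    have hW : HasDerivWithinAt φ (∑ i, d i * Real.log (q₁ i)) (Set.Ioi (0:ℝ)) 0 :=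
      hderiv.hasDerivWithinAt
    rw [hasDerivWithinAt_iff_tendsto_slope] at hW
    have hset : Set.Ioi (0:ℝ) \ {0} = Set.Ioi 0 := Set.diff_singleton_eq_self (by simp)
    rw [hset] at hW
    refine ge_of_tendsto hW ?_
    filter_upwards [Ioc_mem_nhdsGT_of_mem (by norm_num : (0:ℝ) ∈ Set.Ico (0:ℝ) 1)] with t ht
    rw [slope_def_field]
    have h0 := hmono t ht
    exact div_nonneg (by linarith) (by linarith [ht.1])
  have heq : ∀ i, qs i * Real.log (qs i / q₁ i) + q₁ i - qs i
      = (qs i * Real.log (qs i) - qs i) - (q₁ i * Real.log (q₁ i) - q₁ i)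
        - d i * Real.log (q₁ i) := by
    intro i
    rcases eq_or_lt_of_le (hqs i) with h | h
    · simp [← h, hd]
      try ring
    · rw [Real.log_div h.ne' (hq₁pos i).ne']
      simp [hd]
      ring
  have hsum : ∑ i, (qs i * Real.log (qs i / q₁ i) + q₁ i - qs i)
      = ((∑ i, (qs i * Real.log (qs i) - qs i))
          - ∑ i, (q₁ i * Real.log (q₁ i) - q₁ i)) - ∑ i, d i * Real.log (q₁ i) := by
    rw [← Finset.sum_sub_distrib, ← Finset.sum_sub_distrib]
    exact Finset.sum_congr rfl fun i _ => heq i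
  rw [hsum]
  linarith
end

section
/- Online mirror descent regret bound over a bounded-mass convex decision set: Let ι be a finite index set of cardinality N ≥ 2, let τ ≥ 1, and let C be a nonempty convex compact subset of functions q : ι → ℝ such that every q ∈ C satisfies q(i) > 0 for all i and ∑_{i∈ι} q(i) ≤ τ. Let K ≥ 1, let c_1, …, c_K : ι → [0,1] be arbitrary cost vectors, and set η = √( 3·log(τN) / K ). Let q₁ ∈ C be a minimizer over C of R(q) = ∑_i ( q(i)·log q(i) − q(i) ), and for 1 ≤ k ≤ K−1 let q_{k+1} ∈ C be a minimizer over C of q ↦ η·∑_i q(i)·c_k(i) + KL(q‖q_k), where KL(q‖p) = ∑_i ( q(i)·log(q(i)/p(i)) + p(i) − q(i) ). Then for every q* ∈ C: ∑_{k=1}^K ∑_{i∈ι} ( q_k(i) − q*(i) )·c_k(i) ≤ 2·τ·√( 3·K·log(τN) ). -/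
open Finset

lemma omd_slope {h : ℝ → ℝ} {d : ℝ} (hd : HasDerivAt h d 0)
    (hmin : ∀ t ∈ Set.Ioc (0:ℝ) 1, h 0 ≤ h t) : 0 ≤ d := by
  have hT : Filter.Tendsto (slope h 0) (nhdsWithin 0 {(0:ℝ)}ᶜ) (nhds d) :=
    hasDerivAt_iff_tendsto_slope.mp hd
  have hT' : Filter.Tendsto (slope h 0) (nhdsWithin 0 (Set.Ioi 0)) (nhds d) :=
    hT.mono_left (nhdsWithin_mono 0 (fun x hx => ne_of_gt hx))
  refine ge_of_tendsto hT' ?_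
  filter_upwards [Ioc_mem_nhdsGT_of_mem (by constructor <;> norm_num : (0:ℝ) ∈ Set.Ico (0:ℝ) 1)] with t ht
  have : 0 ≤ (h t - h 0) / (t - 0) := div_nonneg (by linarith [hmin t ht]) (by linarith [ht.1])
  simpa [slope, div_eq_inv_mul] using this

lemma omd_exp_quad {x : ℝ} (hx : 0 ≤ x) : Real.exp (-x) ≤ 1 - x + x^2/2 := by
  have key : ∀ y ∈ Set.Ici (0:ℝ), Real.exp (-y) - (1 - y + y^2/2) ≤ 0 := by
    have hmono : MonotoneOn (fun y : ℝ => (1 - y + y^2/2) - Real.exp (-y)) (Set.Ici 0) := by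
      apply monotoneOn_of_deriv_nonneg (convex_Ici 0)
      · fun_prop
      · fun_prop
      · intro y hy
        have hdiff : HasDerivAt (fun y : ℝ => (1 - y + y^2/2) - Real.exp (-y))
            ((-1 + y) - (-Real.exp (-y))) y := by
          have h1 : HasDerivAt (fun y : ℝ => Real.exp (-y)) (-Real.exp (-y)) y := by
            simpa [Function.comp_def] using (Real.hasDerivAt_exp (-y)).comp y (hasDerivAt_neg y)
          have h2 : HasDerivAt (fun y : ℝ => 1 - y + y^2/2) (-1 + y) y := by
            have hq := ((hasDerivAt_pow 2 y).div_const 2)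
            have hl : HasDerivAt (fun y : ℝ => 1 - y) (-1) y := by
              simpa using (hasDerivAt_id y).const_sub 1
            have := hl.fun_add hq
            exact this.congr_deriv (by norm_num)
          exact h2.sub h1
        rw [hdiff.deriv]
        have := Real.add_one_le_exp (-y)
        linarith
    intro y hy
    have := hmono (Set.mem_Ici.mpr le_rfl) hy (Set.mem_Ici.mp hy)
    simp at this ⊢
    linarith
  linarith [key x hx]

/-- pointwise KL nonneg:  p - r ≤ p log(p/r) -/
lemma omd_pt {p r : ℝ} (hp : 0 < p) (hr : 0 < r) : p - r ≤ p * Real.log (p / r) := by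
  have h := Real.log_le_sub_one_of_pos (show 0 < r / p by positivity)
  have hlog : Real.log (r / p) = - Real.log (p / r) := by
    rw [← Real.log_inv]; congr 1; field_simp
  rw [hlog] at h
  have : -(p * Real.log (p/r)) ≤ p * (r/p - 1) := by
    have := mul_le_mul_of_nonneg_left h (le_of_lt hp)
    linarith [this]
  have hrp : p * (r/p - 1) = r - p := by field_simp
  linarith [hrp ▸ this]

lemma omd_coord {a b γ : ℝ} (ha : 0 < a) (hb : 0 < b) (hγ : 0 ≤ γ) :
    γ * (a - b) - (b * Real.log (b / a) + a - b) ≤ a * γ^2 / 2 := by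
  set w : ℝ := a * Real.exp (-γ) with hw
  have hw0 : 0 < w := by positivity
  have key : b - w ≤ b * Real.log (b / w) := omd_pt hb hw0
  have hlogw : Real.log (b / w) = Real.log (b / a) + γ := by
    rw [hw, Real.log_div hb.ne' (by positivity), Real.log_mul ha.ne' (Real.exp_ne_zero _),
      Real.log_exp, Real.log_div hb.ne' ha.ne']
    ring
  rw [hlogw] at key
  have hexp : Real.exp (-γ) ≤ 1 - γ + γ^2/2 := omd_exp_quad hγ
  have hwle : w ≤ a * (1 - γ + γ^2/2) := by
    rw [hw]; exact mul_le_mul_of_nonneg_left hexp ha.le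
  nlinarith [key, hwle]

lemma omd_first_order {ι : Type*} [Fintype ι] (m x y : ι → ℝ) (hx : ∀ i, 0 < x i)
    (hmin : ∀ t ∈ Set.Ioc (0:ℝ) 1,
      ∑ i, x i * (Real.log (x i) + m i) ≤
        ∑ i, (x i + t * (y i - x i)) * (Real.log (x i + t * (y i - x i)) + m i)) :
    0 ≤ ∑ i, (Real.log (x i) + m i + 1) * (y i - x i) := by
  apply omd_slope (h := fun t => ∑ i, (x i + t * (y i - x i)) *
      (Real.log (x i + t * (y i - x i)) + m i))
  · apply HasDerivAt.fun_sum
    intro i _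
    have hinner : HasDerivAt (fun t : ℝ => x i + t * (y i - x i)) (y i - x i) 0 := by
      simpa using ((hasDerivAt_id (0:ℝ)).mul_const (y i - x i)).const_add (x i)
    have houter : HasDerivAt (fun u : ℝ => u * (Real.log u + m i))
        (Real.log (x i) + m i + 1) (x i) := by
      have := (hasDerivAt_id (x i)).mul ((Real.hasDerivAt_log (hx i).ne').add_const (m i))
      exact this.congr_deriv (by simp only [id, one_mul, mul_inv_cancel₀ (hx i).ne'])
    have h0 : x i + (0:ℝ) * (y i - x i) = x i := by ring
    rw [← h0] at houter
    have hcomp := HasDerivAt.comp (0:ℝ) houter hinner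
    exact hcomp.congr_deriv (by rw [h0])
  · intro t ht
    have := hmin t ht
    simpa using this

noncomputable def omdKL {ι : Type*} [Fintype ι] (p r : ι → ℝ) : ℝ :=
  ∑ i, (p i * Real.log (p i / r i) + r i - p i)

lemma omdKL_nonneg {ι : Type*} [Fintype ι] {p r : ι → ℝ}
    (hp : ∀ i, 0 < p i) (hr : ∀ i, 0 < r i) : 0 ≤ omdKL p r := by
  refine Finset.sum_nonneg fun i _ => ?_
  have := omd_pt (hp i) (hr i)
  linarith

set_option maxHeartbeats 2000000 in
/-- Online mirror descent regret bound over a convex compact decision set of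
positive vectors with total mass at most `τ`. -/
theorem omd_regret_bound
    {ι : Type*} [Fintype ι] (hcard : 2 ≤ Fintype.card ι)
    (τ : ℝ) (hτ : 1 ≤ τ)
    (C : Set (ι → ℝ)) (hCne : C.Nonempty) (hCconv : Convex ℝ C) (hCcomp : IsCompact C)
    (hCpos : ∀ q ∈ C, ∀ i, 0 < q i) (hCsum : ∀ q ∈ C, ∑ i, q i ≤ τ)
    (K : ℕ) (hK : 1 ≤ K)
    (c : ℕ → ι → ℝ) (hc : ∀ k i, c k i ∈ Set.Icc (0 : ℝ) 1)
    (η : ℝ) (hη : η = Real.sqrt (3 * Real.log (τ * Fintype.card ι) / K))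
    (q : ℕ → ι → ℝ)
    (hq1C : q 1 ∈ C)
    (hq1min : ∀ p ∈ C,
      ∑ i, (q 1 i * Real.log (q 1 i) - q 1 i) ≤ ∑ i, (p i * Real.log (p i) - p i))
    (hqkC : ∀ k, 1 ≤ k → k ≤ K - 1 → q (k + 1) ∈ C)
    (hqkmin : ∀ k, 1 ≤ k → k ≤ K - 1 → ∀ p ∈ C,
      η * (∑ i, q (k + 1) i * c k i) +
          ∑ i, (q (k + 1) i * Real.log (q (k + 1) i / q k i) + q k i - q (k + 1) i)
        ≤ η * (∑ i, p i * c k i) +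
          ∑ i, (p i * Real.log (p i / q k i) + q k i - p i))
    (qs : ι → ℝ) (hqs : qs ∈ C) :
    ∑ k ∈ Finset.Icc 1 K, ∑ i, (q k i - qs i) * c k i ≤
      2 * τ * Real.sqrt (3 * K * Real.log (τ * Fintype.card ι)) := by
  have hιne : Nonempty ι := Fintype.card_pos_iff.mp (by omega)
  have hτ0 : (0:ℝ) < τ := lt_of_lt_of_le one_pos hτ
  have hN2 : (2:ℝ) ≤ (Fintype.card ι : ℝ) := by exact_mod_cast hcard
  have hN0 : (0:ℝ) < (Fintype.card ι : ℝ) := by linarith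
  set L : ℝ := Real.log (τ * (Fintype.card ι : ℝ)) with hLdef
  have hlog2 : Real.log 2 ≤ L := Real.log_le_log (by norm_num) (by nlinarith)
  have hL069 : (0.693:ℝ) ≤ L := le_trans (by linarith [Real.log_two_gt_d9]) hlog2
  have hL0 : (0:ℝ) < L := by linarith
  have hK0 : (0:ℝ) < (K:ℝ) := by exact_mod_cast hK
  have hη2 : η^2 = 3*L/(K:ℝ) := by
    rw [hη]; exact Real.sq_sqrt (by positivity)
  have hη0 : 0 < η := by
    rw [hη]; exact Real.sqrt_pos.mpr (by positivity)
  -- membership of iterates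
  have hmem : ∀ k, 1 ≤ k → k ≤ K → q k ∈ C := by
    intro k hk1 hkK
    obtain ⟨j, rfl⟩ : ∃ j, k = j + 1 := ⟨k - 1, by omega⟩
    rcases Nat.eq_zero_or_pos j with hj | hj
    · subst hj; exact hq1C
    · exact hqkC j (by omega) (by omega)
  -- segment membership helper
  have hseg : ∀ (x : ι → ℝ), x ∈ C → ∀ t ∈ Set.Ioc (0:ℝ) 1,
      (fun i => x i + t * (qs i - x i)) ∈ C := by
    intro x hx t ht
    have h := hCconv hx hqs (by linarith [ht.2] : (0:ℝ) ≤ 1 - t) ht.1.le (by ring)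
    convert h using 1
    funext i
    simp [Pi.smul_apply, smul_eq_mul]
    ring
  -- Step 1: per-round inequality
  have hstep : ∀ k, 1 ≤ k → k ≤ K - 1 →
      η * (∑ i, (q k i - qs i) * c k i) ≤
        omdKL qs (q k) - omdKL qs (q (k+1)) + η^2 * τ / 2 := by
    intro k hk1 hk2
    have hA : q k ∈ C := hmem k hk1 (by omega)
    have hX : q (k+1) ∈ C := hqkC k hk1 hk2
    have hApos : ∀ i, 0 < q k i := hCpos _ hA
    have hXpos : ∀ i, 0 < q (k+1) i := hCpos _ hX
    have keyeq : ∀ p : ι → ℝ, (∀ i, 0 < p i) →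
        η * (∑ i, p i * c k i) + ∑ i, (p i * Real.log (p i / q k i) + q k i - p i)
          = (∑ i, p i * (Real.log (p i) + (η * c k i - Real.log (q k i) - 1)))
            + ∑ i, q k i := by
      intro p hp
      rw [Finset.mul_sum, ← Finset.sum_add_distrib, ← Finset.sum_add_distrib]
      refine Finset.sum_congr rfl fun i _ => ?_
      rw [Real.log_div (hp i).ne' (hApos i).ne']
      ring
    have FO : 0 ≤ ∑ i, (Real.log (q (k+1) i) + (η * c k i - Real.log (q k i) - 1) + 1)
        * (qs i - q (k+1) i) := by
      apply omd_first_order _ _ _ hXpos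
      intro t ht
      have hzC := hseg _ hX t ht
      have hzpos := hCpos _ hzC
      have hle := hqkmin k hk1 hk2 _ hzC
      have e1 := keyeq (q (k+1)) hXpos
      have e2 := keyeq (fun i => q (k+1) i + t * (qs i - q (k+1) i)) hzpos
      linarith
    have e1 : ∑ i, (Real.log (q (k+1) i) + (η * c k i - Real.log (q k i) - 1) + 1)
          * (qs i - q (k+1) i)
        = η * (∑ i, (qs i - q (k+1) i) * c k i)
          + ∑ i, (Real.log (q (k+1) i) - Real.log (q k i)) * (qs i - q (k+1) i) := by
      rw [Finset.mul_sum, ← Finset.sum_add_distrib]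
      exact Finset.sum_congr rfl fun i _ => by ring
    have hqspos := hCpos qs hqs
    have e2 : ∑ i, (Real.log (q (k+1) i) - Real.log (q k i)) * (qs i - q (k+1) i)
        = omdKL qs (q k) - omdKL qs (q (k+1)) - omdKL (q (k+1)) (q k) := by
      unfold omdKL
      rw [← Finset.sum_sub_distrib, ← Finset.sum_sub_distrib]
      refine Finset.sum_congr rfl fun i _ => ?_
      rw [Real.log_div (hqspos i).ne' (hApos i).ne',
        Real.log_div (hqspos i).ne' (hXpos i).ne',
        Real.log_div (hXpos i).ne' (hApos i).ne']
      ring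
    have e3 : η * (∑ i, (q k i - q (k+1) i) * c k i) - omdKL (q (k+1)) (q k)
        ≤ η^2 * τ / 2 := by
      unfold omdKL
      rw [Finset.mul_sum, ← Finset.sum_sub_distrib]
      have hbound : ∀ i ∈ Finset.univ,
          η * ((q k i - q (k+1) i) * c k i)
            - (q (k+1) i * Real.log (q (k+1) i / q k i) + q k i - q (k+1) i)
          ≤ q k i * η^2 / 2 := by
        intro i _
        have h1 := omd_coord (hApos i) (hXpos i)
          (mul_nonneg hη0.le (hc k i).1)
        have hcc := hc k i
        have hγ2 : (η * c k i)^2 ≤ η^2 := by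
          have hr : (η * c k i)^2 = η^2 * (c k i)^2 := by ring
          rw [hr]
          nlinarith [sq_nonneg η, hcc.1, hcc.2, mul_nonneg (sq_nonneg η)
            (by nlinarith [hcc.1, hcc.2] : (0:ℝ) ≤ 1 - (c k i)^2)]
        nlinarith [mul_nonneg (sub_nonneg.mpr hγ2) (hApos i).le]
      calc ∑ i, (η * ((q k i - q (k+1) i) * c k i)
            - (q (k+1) i * Real.log (q (k+1) i / q k i) + q k i - q (k+1) i))
          ≤ ∑ i, q k i * η^2 / 2 := Finset.sum_le_sum hbound
        _ = (∑ i, q k i) * η^2 / 2 := by rw [← Finset.sum_div, ← Finset.sum_mul]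
        _ ≤ τ * η^2 / 2 := by
            have := hCsum _ hA
            nlinarith [sq_nonneg η]
        _ = η^2 * τ / 2 := by ring
    have e5 : η * (∑ i, (q k i - qs i) * c k i)
        = η * (∑ i, (q k i - q (k+1) i) * c k i)
          + η * (∑ i, (q (k+1) i - qs i) * c k i) := by
      rw [← mul_add, ← Finset.sum_add_distrib]
      congr 1
      exact Finset.sum_congr rfl fun i _ => by ring
    have e4 : η * (∑ i, (qs i - q (k+1) i) * c k i)
        = - (η * (∑ i, (q (k+1) i - qs i) * c k i)) := by
      have h : (∑ i, (qs i - q (k+1) i) * c k i)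
          = - ∑ i, (q (k+1) i - qs i) * c k i := by
        rw [← Finset.sum_neg_distrib]
        exact Finset.sum_congr rfl fun i _ => by ring
      rw [h]; ring
    rw [e1, e4, e2] at FO
    linarith [FO, e3, e5]
  -- Step 2: initial KL bound
  have hq1pos : ∀ i, 0 < q 1 i := hCpos _ hq1C
  have hqspos := hCpos qs hqs
  have rform : ∀ p : ι → ℝ, ∑ i, (p i * Real.log (p i) - p i)
      = ∑ i, p i * (Real.log (p i) + (-1 : ℝ)) :=
    fun p => Finset.sum_congr rfl fun i _ => by ring
  have FO1 : 0 ≤ ∑ i, (Real.log (q 1 i) + (-1 : ℝ) + 1) * (qs i - q 1 i) := by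
    apply omd_first_order _ _ _ hq1pos
    intro t ht
    have hzC := hseg _ hq1C t ht
    have hle := hq1min _ hzC
    rw [rform, rform] at hle
    exact hle
  have FO1' : 0 ≤ ∑ i, Real.log (q 1 i) * (qs i - q 1 i) := by
    refine le_trans FO1 (le_of_eq ?_)
    exact Finset.sum_congr rfl fun i _ => by ring
  have id1 : omdKL qs (q 1) = ∑ i, (qs i * Real.log (qs i) - qs i)
      - ∑ i, (q 1 i * Real.log (q 1 i) - q 1 i)
      - ∑ i, Real.log (q 1 i) * (qs i - q 1 i) := by
    unfold omdKL
    rw [← Finset.sum_sub_distrib, ← Finset.sum_sub_distrib]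
    refine Finset.sum_congr rfl fun i _ => ?_
    rw [Real.log_div (hqspos i).ne' (hq1pos i).ne']
    ring
  have hqsle : ∀ i, qs i ≤ τ := fun i =>
    le_trans (Finset.single_le_sum (fun j _ => (hqspos j).le) (Finset.mem_univ i))
      (hCsum qs hqs)
  have hRqs : ∑ i, (qs i * Real.log (qs i) - qs i) ≤ τ * Real.log τ := by
    calc ∑ i, (qs i * Real.log (qs i) - qs i) ≤ ∑ i, qs i * Real.log τ := by
          refine Finset.sum_le_sum fun i _ => ?_
          have hl := Real.log_le_log (hqspos i) (hqsle i)
          nlinarith [(hqspos i).le]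
      _ = (∑ i, qs i) * Real.log τ := by rw [← Finset.sum_mul]
      _ ≤ τ * Real.log τ :=
          mul_le_mul_of_nonneg_right (hCsum qs hqs) (Real.log_nonneg hτ)
  have hRq1 : -(τ * Real.log (Fintype.card ι : ℝ) + τ)
      ≤ ∑ i, (q 1 i * Real.log (q 1 i) - q 1 i) := by
    set S : ℝ := ∑ i, q 1 i with hSdef
    have hS0 : 0 < S := Finset.sum_pos (fun i _ => hq1pos i) Finset.univ_nonempty
    have hSτ : S ≤ τ := hCsum _ hq1C
    set u : ℝ := S / (Fintype.card ι : ℝ) with hudef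
    have hu0 : 0 < u := by positivity
    have jensen : S * Real.log u ≤ ∑ i, q 1 i * Real.log (q 1 i) := by
      have hpt : ∀ i ∈ Finset.univ, q 1 i * Real.log u + (q 1 i - u)
          ≤ q 1 i * Real.log (q 1 i) := by
        intro i _
        have h := omd_pt (hq1pos i) hu0
        rw [Real.log_div (hq1pos i).ne' hu0.ne'] at h
        nlinarith
      have hsum_u : ∑ i : ι, (q 1 i * Real.log u + (q 1 i - u)) = S * Real.log u := by
        rw [Finset.sum_add_distrib, ← Finset.sum_mul, Finset.sum_sub_distrib,
          Finset.sum_const, Finset.card_univ]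
        have hNu : (Fintype.card ι : ℝ) * u = S := by
          rw [hudef]; field_simp
        rw [nsmul_eq_mul, hNu]
        ring
      calc S * Real.log u = ∑ i : ι, (q 1 i * Real.log u + (q 1 i - u)) := hsum_u.symm
        _ ≤ ∑ i, q 1 i * Real.log (q 1 i) := Finset.sum_le_sum hpt
    have hlogu : Real.log u = Real.log S - Real.log (Fintype.card ι : ℝ) :=
      Real.log_div hS0.ne' hN0.ne'
    have hN1 : (1:ℝ) ≤ (Fintype.card ι : ℝ) := by linarith
    have hlogN0 : 0 ≤ Real.log (Fintype.card ι : ℝ) := Real.log_nonneg hN1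
    have hkey : -(τ * Real.log (Fintype.card ι : ℝ) + τ) ≤ S * Real.log u - S := by
      rw [hlogu]
      rcases le_or_gt 1 S with hS1 | hS1
      · have hlS0 : 0 ≤ Real.log S := Real.log_nonneg hS1
        nlinarith [mul_nonneg (sub_nonneg.mpr hSτ) hlogN0, mul_nonneg hS0.le hlS0]
      · have hSl : S - 1 ≤ S * Real.log S := by
          have := omd_pt hS0 one_pos
          simpa using this
        nlinarith [mul_nonneg (sub_nonneg.mpr hSτ) hlogN0]
    have hsplit : ∑ i, (q 1 i * Real.log (q 1 i) - q 1 i)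
        = (∑ i, q 1 i * Real.log (q 1 i)) - S := by
      rw [Finset.sum_sub_distrib]
    rw [hsplit]
    linarith [jensen]
  have hlogmul : L = Real.log τ + Real.log (Fintype.card ι : ℝ) := by
    rw [hLdef]; exact Real.log_mul hτ0.ne' hN0.ne'
  have hKL1 : omdKL qs (q 1) ≤ 3 * τ * L := by
    rw [id1]
    have h1 : τ * Real.log τ + τ * Real.log (Fintype.card ι : ℝ) + τ ≤ 3 * τ * L := by
      have hlogτ0 : 0 ≤ Real.log τ := Real.log_nonneg hτ
      nlinarith [mul_nonneg hτ0.le hlogτ0, mul_nonneg hτ0.le hL0.le]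
    linarith [hRqs, hRq1, FO1']
  -- telescoping sum
  have hKLnn : ∀ k, 1 ≤ k → k ≤ K → 0 ≤ omdKL qs (q k) :=
    fun k h1 h2 => omdKL_nonneg hqspos (hCpos _ (hmem k h1 h2))
  have htel : ∑ k ∈ Finset.Icc 1 (K-1), (omdKL qs (q k) - omdKL qs (q (k+1)))
      = omdKL qs (q 1) - omdKL qs (q K) := by
    have h1 : Finset.Icc 1 (K-1) = Finset.Ico 1 K := by
      rw [← Finset.Ico_add_one_right_eq_Icc]
      congr 1
      omega
    rw [h1, Finset.sum_Ico_eq_sum_range]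
    have h2 := Finset.sum_range_sub' (f := fun j => omdKL qs (q (1+j))) (n := K-1)
    have h3 : 1 + (K-1) = K := by omega
    rw [h3] at h2
    rw [← h2]
    refine Finset.sum_congr rfl fun j _ => ?_
    have : 1 + j + 1 = 1 + (j + 1) := by omega
    rw [this]
  have hηT : η * (∑ k ∈ Finset.Icc 1 (K-1), ∑ i, (q k i - qs i) * c k i)
      ≤ 3 * τ * L + ((K:ℝ) - 1) * (η^2 * τ / 2) := by
    rw [Finset.mul_sum]
    calc ∑ k ∈ Finset.Icc 1 (K-1), η * ∑ i, (q k i - qs i) * c k i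
        ≤ ∑ k ∈ Finset.Icc 1 (K-1),
            (omdKL qs (q k) - omdKL qs (q (k+1)) + η^2 * τ / 2) := by
          refine Finset.sum_le_sum fun k hk => ?_
          rw [Finset.mem_Icc] at hk
          exact hstep k hk.1 hk.2
      _ = (omdKL qs (q 1) - omdKL qs (q K)) + (K - 1 : ℕ) * (η^2 * τ / 2) := by
          rw [Finset.sum_add_distrib, htel, Finset.sum_const, Nat.card_Icc]
          simp [nsmul_eq_mul]
      _ ≤ 3 * τ * L + ((K:ℝ) - 1) * (η^2 * τ / 2) := by
          have hc1 : ((K - 1 : ℕ) : ℝ) = (K:ℝ) - 1 := by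
            push_cast [Nat.cast_sub hK]
            ring
          rw [hc1]
          linarith [hKLnn K hK le_rfl, hKL1]
  have hSTK : ∑ i, (q K i - qs i) * c K i ≤ τ := by
    have hQK : q K ∈ C := hmem K hK le_rfl
    have hQKpos := hCpos _ hQK
    calc ∑ i, (q K i - qs i) * c K i ≤ ∑ i, q K i := by
          refine Finset.sum_le_sum fun i _ => ?_
          have hcc := hc K i
          nlinarith [mul_nonneg (hqspos i).le hcc.1, (hQKpos i).le, hcc.1, hcc.2]
      _ ≤ τ := hCsum _ hQK
  rcases eq_or_lt_of_le hK with hK1 | hK2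
  · -- K = 1
    have hST1 : ∑ i, (q 1 i - qs i) * c 1 i ≤ τ := by
      rw [← hK1] at hSTK; exact hSTK
    have hs : (1/2 : ℝ) ≤ Real.sqrt (3 * (K:ℝ) * L) := by
      rw [← hK1]
      push_cast
      rw [show (1/2:ℝ) = Real.sqrt ((1/2)^2) by rw [Real.sqrt_sq]; norm_num]
      apply Real.sqrt_le_sqrt
      nlinarith
    have hgoal : ∑ k ∈ Finset.Icc 1 K, ∑ i, (q k i - qs i) * c k i
        = ∑ i, (q 1 i - qs i) * c 1 i := by
      rw [← hK1]; simp
    rw [hgoal]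
    have hmul := mul_le_mul_of_nonneg_left hs (by linarith : (0:ℝ) ≤ 2 * τ)
    linarith
  · -- K ≥ 2
    have hK2' : (2:ℝ) ≤ (K:ℝ) := by exact_mod_cast hK2
    have hKeq : ∑ k ∈ Finset.Icc 1 K, ∑ i, (q k i - qs i) * c k i
        = (∑ k ∈ Finset.Icc 1 (K-1), ∑ i, (q k i - qs i) * c k i)
          + ∑ i, (q K i - qs i) * c K i := by
      have h2 : K = (K-1) + 1 := by omega
      rw [h2, Finset.sum_Icc_succ_top (by omega : 1 ≤ K - 1 + 1)]
      simp
    have hmain : η * (∑ k ∈ Finset.Icc 1 K, ∑ i, (q k i - qs i) * c k i)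
        ≤ 3 * τ * L + ((K:ℝ) - 1) * (η^2 * τ / 2) + η * τ := by
      rw [hKeq, mul_add]
      have := mul_le_mul_of_nonneg_left hSTK hη0.le
      linarith [hηT]
    have hb1 : ((K:ℝ) - 1) * (η^2 * τ / 2) ≤ 3 * L * τ / 2 := by
      rw [hη2]
      have hpos : (0:ℝ) ≤ 3 * L / (K:ℝ) * τ / 2 := by positivity
      have h := mul_le_mul_of_nonneg_right (show ((K:ℝ) - 1) ≤ (K:ℝ) by linarith)
        hpos
      have heq : (K:ℝ) * (3 * L / (K:ℝ) * τ / 2) = 3 * L * τ / 2 := by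
        field_simp
      calc ((K:ℝ) - 1) * (3 * L / (K:ℝ) * τ / 2)
          ≤ (K:ℝ) * (3 * L / (K:ℝ) * τ / 2) := h
        _ = 3 * L * τ / 2 := heq
    have hb2 : η * τ ≤ 3 * L * τ / 2 := by
      have hηle : η ≤ 3 * L / 2 := by
        have hsq : η^2 ≤ (3 * L / 2)^2 := by
          rw [hη2]
          have : 3 * L / (K:ℝ) ≤ 3 * L / 2 :=
            div_le_div_of_nonneg_left (by positivity) (by norm_num) hK2'
          nlinarith
        nlinarith [hη0.le, hL0.le]
      nlinarith [hτ0.le]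
    have hηs : η * Real.sqrt (3 * (K:ℝ) * L) = 3 * L := by
      rw [hη, ← Real.sqrt_mul (by positivity)]
      have harg : 3 * L / (K:ℝ) * (3 * (K:ℝ) * L) = (3 * L)^2 := by
        field_simp
      rw [harg, Real.sqrt_sq (by positivity)]
    rw [← mul_le_mul_iff_right₀ hη0]
    calc η * (∑ k ∈ Finset.Icc 1 K, ∑ i, (q k i - qs i) * c k i)
        ≤ 6 * τ * L := by linarith [hmain, hb1, hb2]
      _ = η * (2 * τ * Real.sqrt (3 * (K:ℝ) * L)) := by
          rw [show η * (2 * τ * Real.sqrt (3 * (K:ℝ) * L))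
            = 2 * τ * (η * Real.sqrt (3 * (K:ℝ) * L)) by ring, hηs]
          ring
end

section
/- Multiplicative anytime bound for adapted bounded nonnegative sequences: Let (X_n)_{n≥1} be a sequence of random variables adapted to a filtration (F_n)_{n≥0} on a probability space, with 0 ≤ X_n ≤ B almost surely for a constant B > 0. Then for every δ ∈ (0,1), with probability at least 1 − δ, simultaneously for all integers n ≥ 1: ∑_{i=1}^n E[ X_i | F_{i−1} ] ≤ 2·∑_{i=1}^n X_i + 4·B·log(2n/δ). -/
open MeasureTheory Finset

private lemma exp_neg_le_one_sub_half {x : ℝ} (h0 : 0 ≤ x) (h1 : x ≤ 1) :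
    Real.exp (-x) ≤ 1 - x / 2 := by
  have h2 : x + 1 ≤ Real.exp x := Real.add_one_le_exp x
  have h4 : (0:ℝ) < Real.exp (-x) := Real.exp_pos _
  have h3 : Real.exp (-x) * Real.exp x = 1 := by rw [← Real.exp_add]; simp
  have h5 := mul_le_mul_of_nonneg_left h2 h4.le
  rw [h3] at h5
  nlinarith [mul_nonneg (mul_nonneg h4.le h0) (by linarith : (0:ℝ) ≤ 1 - x)]

/-- Multiplicative anytime bound for adapted sequences of bounded nonnegative
random variables: with probability at least `1 - δ`, simultaneously for all `n`,
`∑_{i=1}^n E[X_i | F_{i-1}] ≤ 2 ∑_{i=1}^n X_i + 4 B log(2n/δ)`. -/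
theorem multiplicative_anytime_bound
    {Ω : Type*} {m0 : MeasurableSpace Ω} {μ : Measure Ω} [IsProbabilityMeasure μ]
    (ℱ : Filtration ℕ m0) (X : ℕ → Ω → ℝ)
    (hadapted : ∀ n, 1 ≤ n → StronglyMeasurable[ℱ n] (X n))
    (B : ℝ) (hB : 0 < B)
    (hbdd : ∀ n, 1 ≤ n → ∀ᵐ ω ∂μ, X n ω ∈ Set.Icc 0 B)
    (δ : ℝ) (hδ0 : 0 < δ) (hδ1 : δ < 1) :
    ENNReal.ofReal (1 - δ) ≤
      μ {ω | ∀ n : ℕ, 1 ≤ n →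
        ∑ i ∈ Finset.Icc 1 n, (μ[X i | ℱ (i - 1)]) ω ≤
          2 * ∑ i ∈ Finset.Icc 1 n, X i ω + 4 * B * Real.log (2 * n / δ)} := by
  classical
  have hle : ∀ n : ℕ, ℱ n ≤ m0 := fun n => ℱ.le n
  set C : ℕ → Ω → ℝ := fun i => μ[X i | ℱ (i - 1)] with hCdef
  set Z : ℕ → Ω → ℝ := fun i ω => Real.exp ((2*B)⁻¹ * C i ω - B⁻¹ * X i ω) with hZdef
  set M : ℕ → Ω → ℝ := fun n ω => ∏ i ∈ Finset.Icc 1 n, Z i ω with hMdef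
  -- basic measurability and integrability
  have hXm : ∀ i, 1 ≤ i → AEStronglyMeasurable (X i) μ :=
    fun i hi => ((hadapted i hi).mono (hle i)).aestronglyMeasurable
  have hXint : ∀ i, 1 ≤ i → Integrable (X i) μ := by
    intro i hi
    refine Integrable.mono' (integrable_const B) (hXm i hi) ?_
    filter_upwards [hbdd i hi] with ω hω
    rw [Real.norm_eq_abs, abs_le]
    exact ⟨by linarith [hω.1], hω.2⟩
  have hCsm : ∀ i, StronglyMeasurable[ℱ (i - 1)] (C i) := fun i => stronglyMeasurable_condExp
  have hCmem : ∀ i, 1 ≤ i → ∀ᵐ ω ∂μ, C i ω ∈ Set.Icc 0 B := by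
    intro i hi
    have h0 : (0 : Ω → ℝ) ≤ᵐ[μ] C i :=
      condExp_nonneg (by filter_upwards [hbdd i hi] with ω hω using hω.1)
    have hb : C i ≤ᵐ[μ] μ[(fun _ => B) | ℱ (i - 1)] :=
      condExp_mono (hXint i hi) (integrable_const B)
        (by filter_upwards [hbdd i hi] with ω hω using hω.2)
    rw [condExp_const (hle (i - 1)) B] at hb
    filter_upwards [h0, hb] with ω h0ω hbω
    exact ⟨h0ω, hbω⟩
  have hZsm : ∀ i, 1 ≤ i → StronglyMeasurable[ℱ i] (Z i) := by
    intro i hi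
    have h1 : StronglyMeasurable[ℱ i] (C i) := (hCsm i).mono (ℱ.mono (Nat.sub_le i 1))
    exact Real.continuous_exp.comp_stronglyMeasurable
      ((stronglyMeasurable_const.mul h1).sub (stronglyMeasurable_const.mul (hadapted i hi)))
  have hMsm : ∀ n, StronglyMeasurable[ℱ n] (M n) := by
    intro n
    exact Finset.stronglyMeasurable_fun_prod _ fun i hi =>
      (hZsm i (Finset.mem_Icc.mp hi).1).mono (ℱ.mono (Finset.mem_Icc.mp hi).2)
  have hMnonneg : ∀ n ω, 0 ≤ M n ω := fun n ω =>
    Finset.prod_nonneg fun i _ => (Real.exp_pos _).le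
  have hZbd : ∀ᵐ ω ∂μ, ∀ i, 1 ≤ i → Z i ω ≤ Real.exp 2⁻¹ := by
    rw [ae_all_iff]
    intro i
    by_cases hi : 1 ≤ i
    · filter_upwards [hbdd i hi, hCmem i hi] with ω h1 h2
      intro _
      apply Real.exp_le_exp.2
      have hX0 : 0 ≤ B⁻¹ * X i ω := mul_nonneg (inv_nonneg.2 hB.le) h1.1
      have hCB : (2*B)⁻¹ * C i ω ≤ (2*B)⁻¹ * B :=
        mul_le_mul_of_nonneg_left h2.2 (inv_nonneg.2 (by linarith))
      have : (2*B)⁻¹ * B = 2⁻¹ := by field_simp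
      linarith
    · exact Filter.Eventually.of_forall fun ω h => absurd h hi
  have hMbd : ∀ n, ∀ᵐ ω ∂μ, M n ω ≤ Real.exp 2⁻¹ ^ n := by
    intro n
    filter_upwards [hZbd] with ω hω
    calc M n ω ≤ ∏ _i ∈ Finset.Icc 1 n, Real.exp 2⁻¹ :=
          Finset.prod_le_prod (fun i _ => (Real.exp_pos _).le)
            (fun i hi => hω i (Finset.mem_Icc.mp hi).1)
      _ = Real.exp 2⁻¹ ^ n := by rw [Finset.prod_const, Nat.card_Icc]; norm_num
  have hMint : ∀ n, Integrable (M n) μ := by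
    intro n
    refine Integrable.mono' (integrable_const (Real.exp 2⁻¹ ^ n))
      ((hMsm n).mono (hle n)).aestronglyMeasurable ?_
    filter_upwards [hMbd n] with ω hω
    rw [Real.norm_eq_abs, abs_of_nonneg (hMnonneg n ω)]
    exact hω
  have hZint : ∀ i, 1 ≤ i → Integrable (Z i) μ := by
    intro i hi
    refine Integrable.mono' (integrable_const (Real.exp 2⁻¹))
      ((hZsm i hi).mono (hle i)).aestronglyMeasurable ?_
    filter_upwards [hZbd] with ω hω
    rw [Real.norm_eq_abs, abs_of_nonneg (Real.exp_pos _).le]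
    exact hω i hi
  have hM_succ : ∀ n ω, M (n+1) ω = M n ω * Z (n+1) ω := by
    intro n ω
    exact Finset.prod_Icc_succ_top (Nat.succ_le_succ (Nat.zero_le n)) _
  -- supermartingale property
  have hsup : ∀ n, ∫ ω, M n ω ∂μ ≤ 1 := by
    intro n
    induction n with
    | zero =>
      have : M 0 = fun _ => 1 := by
        funext ω; rw [hMdef]; simp
      rw [this]
      simp
    | succ n ih =>
      have hn1 : (1:ℕ) ≤ n + 1 := Nat.succ_le_succ (Nat.zero_le n)
      have hCsm' : StronglyMeasurable[ℱ n] (C (n+1)) := hCsm (n+1)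
      set φ : Ω → ℝ := fun ω => Real.exp ((2*B)⁻¹ * C (n+1) ω) with hφdef
      set ψ : Ω → ℝ := fun ω => Real.exp (-(B⁻¹ * X (n+1) ω)) with hψdef
      have hφsm : StronglyMeasurable[ℱ n] φ :=
        Real.continuous_exp.comp_stronglyMeasurable (stronglyMeasurable_const.mul hCsm')
      have hφψ : Z (n+1) = φ * ψ := by
        funext ω
        rw [hZdef, hφdef, hψdef]
        show Real.exp _ = Real.exp _ * Real.exp _
        rw [← Real.exp_add]
        ring_nf
      have hψint : Integrable ψ μ := by
        refine Integrable.mono' (integrable_const 1)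
          (Real.continuous_exp.comp_aestronglyMeasurable
            (((hXm (n+1) hn1).const_mul B⁻¹).neg)) ?_
        filter_upwards [hbdd (n+1) hn1] with ω hω
        rw [Real.norm_eq_abs, abs_of_nonneg (Real.exp_pos _).le]
        calc Real.exp (-(B⁻¹ * X (n+1) ω)) ≤ Real.exp 0 :=
              Real.exp_le_exp.2 (by nlinarith [mul_nonneg (inv_nonneg.2 hB.le) hω.1])
          _ = 1 := Real.exp_zero
      have hφψint : Integrable (φ * ψ) μ := (hZint (n+1) hn1).congr
        (Filter.Eventually.of_forall fun ω => by rw [hφψ])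
      -- conditional expectation of ψ
      set ξ : Ω → ℝ := (fun _ : Ω => (1:ℝ)) - (2*B)⁻¹ • X (n+1) with hξdef
      have hξapp : ∀ ω, ξ ω = 1 - (2*B)⁻¹ * X (n+1) ω := by
        intro ω; rw [hξdef]; simp [smul_eq_mul]
      have hξint : Integrable ξ μ :=
        (integrable_const 1).sub ((hXint (n+1) hn1).smul ((2*B)⁻¹))
      have hpt : ψ ≤ᵐ[μ] ξ := by
        filter_upwards [hbdd (n+1) hn1] with ω hω
        have h01 : 0 ≤ B⁻¹ * X (n+1) ω := mul_nonneg (inv_nonneg.2 hB.le) hω.1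
        have h11 : B⁻¹ * X (n+1) ω ≤ 1 := by
          rw [inv_mul_eq_div, div_le_one hB]; exact hω.2
        have h12 := exp_neg_le_one_sub_half h01 h11
        have heq : (2*B)⁻¹ * X (n+1) ω = (B⁻¹ * X (n+1) ω) / 2 := by
          rw [mul_inv]; ring
        rw [hξapp ω, heq]
        exact h12
      have hcond_le : μ[ψ | ℱ n] ≤ᵐ[μ] fun ω => 1 - (2*B)⁻¹ * C (n+1) ω := by
        have h2 := condExp_mono (m := ℱ n) hψint hξint hpt
        have h4 : μ[ξ | ℱ n] =ᵐ[μ]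
            μ[(fun _ : Ω => (1:ℝ)) | ℱ n] - μ[(2*B)⁻¹ • X (n+1) | ℱ n] :=
          condExp_sub (integrable_const 1) ((hXint (n+1) hn1).smul ((2*B)⁻¹)) (ℱ n)
        have h5 : μ[(2*B)⁻¹ • X (n+1) | ℱ n] =ᵐ[μ] (2*B)⁻¹ • μ[X (n+1) | ℱ n] :=
          condExp_smul ((2*B)⁻¹) (X (n+1)) (ℱ n)
        filter_upwards [h2, h4, h5] with ω h2ω h4ω h5ω
        have hconst : μ[(fun _ : Ω => (1:ℝ)) | ℱ n] = fun _ => (1:ℝ) :=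
          condExp_const (hle n) 1
        calc (μ[ψ | ℱ n]) ω ≤ (μ[ξ | ℱ n]) ω := h2ω
          _ = (μ[(fun _ : Ω => (1:ℝ)) | ℱ n]) ω - (μ[(2*B)⁻¹ • X (n+1) | ℱ n]) ω := h4ω
          _ = 1 - (2*B)⁻¹ * C (n+1) ω := by
              rw [hconst, h5ω]
              rfl
      have hZcond : μ[Z (n+1) | ℱ n] ≤ᵐ[μ] fun _ => (1:ℝ) := by
        have hmulφψ : μ[φ * ψ | ℱ n] =ᵐ[μ] φ * μ[ψ | ℱ n] :=
          condExp_mul_of_stronglyMeasurable_left hφsm hφψint hψint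
        have hcongr : μ[Z (n+1) | ℱ n] =ᵐ[μ] μ[φ * ψ | ℱ n] :=
          condExp_congr_ae (Filter.Eventually.of_forall fun ω => by rw [hφψ])
        filter_upwards [hmulφψ, hcongr, hcond_le, hCmem (n+1) hn1] with ω h1 h0 h2 h3
        rw [h0, h1]
        show φ ω * (μ[ψ | ℱ n]) ω ≤ 1
        have hφpos : 0 < φ ω := Real.exp_pos _
        have step2 : 1 - (2*B)⁻¹ * C (n+1) ω ≤ Real.exp (-((2*B)⁻¹ * C (n+1) ω)) := by
          linarith [Real.add_one_le_exp (-((2*B)⁻¹ * C (n+1) ω))]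
        have step3 : φ ω * Real.exp (-((2*B)⁻¹ * C (n+1) ω)) = 1 := by
          rw [hφdef]
          show Real.exp _ * Real.exp _ = 1
          rw [← Real.exp_add]
          simp
        calc φ ω * (μ[ψ | ℱ n]) ω ≤ φ ω * (1 - (2*B)⁻¹ * C (n+1) ω) :=
              mul_le_mul_of_nonneg_left h2 hφpos.le
          _ ≤ φ ω * Real.exp (-((2*B)⁻¹ * C (n+1) ω)) :=
              mul_le_mul_of_nonneg_left step2 hφpos.le
          _ = 1 := step3
      have hMZint : Integrable (M n * Z (n+1)) μ := (hMint (n+1)).congr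
        (Filter.Eventually.of_forall fun ω => hM_succ n ω)
      have hmul : μ[M n * Z (n+1) | ℱ n] =ᵐ[μ] M n * μ[Z (n+1) | ℱ n] :=
        condExp_mul_of_stronglyMeasurable_left (hMsm n) hMZint (hZint (n+1) hn1)
      calc ∫ ω, M (n+1) ω ∂μ = ∫ ω, (M n * Z (n+1)) ω ∂μ :=
            integral_congr_ae (Filter.Eventually.of_forall fun ω => hM_succ n ω)
        _ = ∫ ω, (μ[M n * Z (n+1) | ℱ n]) ω ∂μ := (integral_condExp (hle n) (f := M n * Z (n+1))).symm
        _ ≤ ∫ ω, M n ω ∂μ := by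
            refine integral_mono_ae integrable_condExp (hMint n) ?_
            filter_upwards [hmul, hZcond] with ω h1 h2
            rw [h1]
            calc (M n * μ[Z (n+1) | ℱ n]) ω = M n ω * (μ[Z (n+1) | ℱ n]) ω := rfl
              _ ≤ M n ω * 1 := mul_le_mul_of_nonneg_left h2 (hMnonneg n ω)
              _ = M n ω := mul_one _
        _ ≤ 1 := ih
  -- Markov bound
  have hmarkov : ∀ n : ℕ, 1 ≤ n →
      μ {ω | (2*(n:ℝ)/δ)^2 ≤ M n ω} ≤ ENNReal.ofReal (δ^2/(2*(n:ℝ))^2) := by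
    intro n hn
    have hn1 : (1:ℝ) ≤ (n:ℝ) := by exact_mod_cast hn
    have hεb : (0:ℝ) < 2*(n:ℝ)/δ := div_pos (by linarith) hδ0
    have hεpos : (0:ℝ) < (2*(n:ℝ)/δ)^2 := pow_pos hεb 2
    have h1 := mul_meas_ge_le_integral_of_nonneg (μ := μ)
      (ae_of_all μ (hMnonneg n)) (hMint n) ((2*(n:ℝ)/δ)^2)
    set t := (μ {ω | (2*(n:ℝ)/δ)^2 ≤ M n ω}).toReal with htdef
    have h3 : (2*(n:ℝ)/δ)^2 * t ≤ 1 := h1.trans (hsup n)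
    have h2 : t ≤ δ^2/(2*(n:ℝ))^2 := by
      rw [div_pow] at h3
      rw [le_div_iff₀ (by positivity : (0:ℝ) < (2*(n:ℝ))^2)]
      have hδ2 : (0:ℝ) < δ^2 := by positivity
      have hmul' := mul_le_mul_of_nonneg_right h3 hδ2.le
      rw [one_mul] at hmul'
      have hid : (2*(n:ℝ))^2/δ^2 * t * δ^2 = t * (2*(n:ℝ))^2 := by
        field_simp
      rw [hid] at hmul'
      exact hmul'
    rw [← ENNReal.ofReal_toReal (measure_ne_top μ _)]
    exact ENNReal.ofReal_le_ofReal h2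
  -- the good set and its complement
  set G := {ω | ∀ n : ℕ, 1 ≤ n →
      ∑ i ∈ Finset.Icc 1 n, (μ[X i | ℱ (i - 1)]) ω ≤
        2 * ∑ i ∈ Finset.Icc 1 n, X i ω + 4 * B * Real.log (2 * n / δ)} with hGdef
  have hGmeas : MeasurableSet G := by
    rw [hGdef, Set.setOf_forall]
    refine MeasurableSet.iInter fun n => ?_
    by_cases hn : 1 ≤ n
    · simp only [hn, true_implies]
      refine measurableSet_le ?_ ?_
      · exact Finset.measurable_sum _ fun i _ =>
          (stronglyMeasurable_condExp.mono (hle _)).measurable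
      · refine Measurable.add ?_ measurable_const
        exact (Finset.measurable_sum _ fun i hi =>
          ((hadapted i (Finset.mem_Icc.mp hi).1).mono (hle i)).measurable).const_mul 2
    · simp only [hn, false_implies, Set.setOf_true]
      exact MeasurableSet.univ
  have hsub : Gᶜ ⊆ ⋃ k : ℕ, {ω | (2*((k+1 : ℕ):ℝ)/δ)^2 ≤ M (k+1) ω} := by
    intro ω hω
    simp only [hGdef, Set.mem_compl_iff, Set.mem_setOf_eq] at hω
    push_neg at hω
    obtain ⟨n, hn1, hn2⟩ := hω
    refine Set.mem_iUnion.2 ⟨n - 1, ?_⟩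
    have hn : n - 1 + 1 = n := Nat.succ_pred_eq_of_pos hn1
    simp only [Set.mem_setOf_eq, hn]
    -- now: (2*n/δ)^2 ≤ M n ω
    have hn1' : (1:ℝ) ≤ (n:ℝ) := by exact_mod_cast hn1
    have hL : (0:ℝ) < 2 * (n:ℝ) / δ := div_pos (by linarith) hδ0
    have hn2' : 2 * ∑ i ∈ Finset.Icc 1 n, X i ω + 4 * B * Real.log (2 * n / δ)
        < ∑ i ∈ Finset.Icc 1 n, C i ω := hn2
    have hMn : M n ω = Real.exp (∑ i ∈ Finset.Icc 1 n,
        ((2*B)⁻¹ * C i ω - B⁻¹ * X i ω)) := (Real.exp_sum _ _).symm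
    have hsum : ∑ i ∈ Finset.Icc 1 n, ((2*B)⁻¹ * C i ω - B⁻¹ * X i ω)
        = (2*B)⁻¹ * (∑ i ∈ Finset.Icc 1 n, C i ω)
          - B⁻¹ * (∑ i ∈ Finset.Icc 1 n, X i ω) := by
      rw [Finset.sum_sub_distrib, Finset.mul_sum, Finset.mul_sum]
    have hexp_ge : 2 * Real.log (2 * (n:ℝ) / δ) ≤ ∑ i ∈ Finset.Icc 1 n,
        ((2*B)⁻¹ * C i ω - B⁻¹ * X i ω) := by
      rw [hsum]
      have hstep : (2*B)⁻¹ * (2 * ∑ i ∈ Finset.Icc 1 n, X i ω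
            + 4 * B * Real.log (2 * n / δ))
          ≤ (2*B)⁻¹ * ∑ i ∈ Finset.Icc 1 n, C i ω :=
        mul_le_mul_of_nonneg_left hn2'.le (inv_nonneg.2 (by linarith))
      have hid : (2*B)⁻¹ * (2 * ∑ i ∈ Finset.Icc 1 n, X i ω
            + 4 * B * Real.log (2 * n / δ))
          - B⁻¹ * (∑ i ∈ Finset.Icc 1 n, X i ω) = 2 * Real.log (2 * (n:ℝ) / δ) := by
        field_simp
        ring
      linarith
    calc (2*(n:ℝ)/δ)^2 = Real.exp (2 * Real.log (2 * (n:ℝ) / δ)) := by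
          rw [show (2:ℝ) * Real.log (2 * (n:ℝ) / δ)
              = Real.log (2 * (n:ℝ) / δ) + Real.log (2 * (n:ℝ) / δ) from by ring,
            Real.exp_add, Real.exp_log hL, sq]
      _ ≤ Real.exp (∑ i ∈ Finset.Icc 1 n, ((2*B)⁻¹ * C i ω - B⁻¹ * X i ω)) :=
          Real.exp_le_exp.2 hexp_ge
      _ = M n ω := hMn.symm
  -- union bound
  have hsummable1 : Summable (fun n : ℕ => 1/((n:ℝ))^2) := hasSum_zeta_two.summable
  have hsummable2 : Summable (fun k : ℕ => 1/(((k+1:ℕ)):ℝ)^2) :=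
    (summable_nat_add_iff (f := fun n : ℕ => 1/((n:ℝ))^2) 1).2 hsummable1
  have hfs : ∀ k : ℕ, δ^2/(2*((k+1:ℕ):ℝ))^2 = (δ^2/4) * (1/(((k+1:ℕ)):ℝ)^2) := by
    intro k; rw [mul_pow]; ring
  have hsummable3 : Summable (fun k : ℕ => δ^2/(2*((k+1:ℕ):ℝ))^2) :=
    ((hsummable2.mul_left (δ^2/4)).congr fun k => (hfs k).symm)
  have htsum_le : (∑' k : ℕ, δ^2/(2*((k+1:ℕ):ℝ))^2) ≤ δ := by
    have h0 := Summable.tsum_eq_zero_add hsummable1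
    rw [hasSum_zeta_two.tsum_eq] at h0
    have hz : (1:ℝ)/(((0:ℕ)):ℝ)^2 = 0 := by norm_num
    rw [hz, zero_add] at h0
    have hpi2 : Real.pi^2 ≤ 16 := by nlinarith [Real.pi_le_four, Real.pi_pos]
    have hδδ : δ^2 ≤ δ := by nlinarith
    calc (∑' k : ℕ, δ^2/(2*((k+1:ℕ):ℝ))^2)
        = (δ^2/4) * ∑' k : ℕ, 1/(((k+1:ℕ)):ℝ)^2 := by
          rw [← tsum_mul_left]; exact tsum_congr hfs
      _ = (δ^2/4) * (Real.pi^2/6) := by rw [← h0]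
      _ ≤ δ := by nlinarith [mul_le_mul_of_nonneg_left hpi2 (sq_nonneg δ)]
  have hunion : μ Gᶜ ≤ ENNReal.ofReal δ := by
    calc μ Gᶜ ≤ μ (⋃ k : ℕ, {ω | (2*((k+1 : ℕ):ℝ)/δ)^2 ≤ M (k+1) ω}) := measure_mono hsub
      _ ≤ ∑' k : ℕ, μ {ω | (2*((k+1 : ℕ):ℝ)/δ)^2 ≤ M (k+1) ω} := measure_iUnion_le _
      _ ≤ ∑' k : ℕ, ENNReal.ofReal (δ^2/(2*((k+1:ℕ):ℝ))^2) :=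
          ENNReal.tsum_le_tsum fun k => hmarkov (k+1) (Nat.succ_le_succ (Nat.zero_le k))
      _ = ENNReal.ofReal (∑' k : ℕ, δ^2/(2*((k+1:ℕ):ℝ))^2) :=
          (ENNReal.ofReal_tsum_of_nonneg (fun k => by positivity) hsummable3).symm
      _ ≤ ENNReal.ofReal δ := ENNReal.ofReal_le_ofReal htsum_le
  -- conclude
  have htotal : μ G + μ Gᶜ = 1 := by
    rw [measure_add_measure_compl hGmeas, measure_univ]
  have h1 : ENNReal.ofReal (1-δ) + μ Gᶜ ≤ μ G + μ Gᶜ := by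
    rw [htotal]
    calc ENNReal.ofReal (1-δ) + μ Gᶜ ≤ ENNReal.ofReal (1-δ) + ENNReal.ofReal δ :=
          add_le_add_right hunion _
      _ = ENNReal.ofReal 1 := by rw [← ENNReal.ofReal_add (by linarith) hδ0.le]; norm_num
      _ = 1 := ENNReal.ofReal_one
  exact ENNReal.le_of_add_le_add_right (measure_ne_top μ Gᶜ) h1
end
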